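/- arXiv:2108.12303 — 10 statements merged into one kernel-verified Lean document; each statement's English description precedes it below -/
import Mathlib

section
/- Let n ∈ ℕ, let a ∈ ℝⁿ with aᵢ > 0 for all i, let c ∈ ℝⁿ, and let n' ∈ {0,…,n} be such that c₁/a₁ > c₂/a₂ > … > c_{n'}/a_{n'} > 0 and cᵢ < 0 for all i > n'. For b ∈ [0, Σ_{i=1}^n aᵢ], define x(b) ∈ ℝⁿ by xᵢ(b) = min(1, max(0, (b − Σ_{j=1}^{i−1} aⱼ)/aᵢ)) for i ≤ n' and xᵢ(b) = 0 for i > n'. Then x(b) is feasible (i.e. x(b) ∈ [0,1]ⁿ and aᵀx(b) ≤ b) and is an optimal solution of the continuous knapsack problem max{cᵀx : aᵀx ≤ b, x ∈ [0,1]ⁿ}. -/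
open scoped Classical

/-- The greedy solution of the continuous knapsack problem (items sorted by
decreasing positive profit ratios, the remaining items having negative value)
is feasible and optimal. -/
theorem stmt_0 (n : ℕ) (a c : Fin n → ℝ) (ha : ∀ i, 0 < a i)
    (n' : ℕ) (hn' : n' ≤ n)
    (hsort : ∀ i j : Fin n, (i : ℕ) < (j : ℕ) → (j : ℕ) < n' → c j / a j < c i / a i)
    (hpos : ∀ i : Fin n, (i : ℕ) < n' → 0 < c i / a i)
    (hneg : ∀ i : Fin n, n' ≤ (i : ℕ) → c i < 0)
    (b : ℝ) (hb : 0 ≤ b) (hbA : b ≤ ∑ i, a i)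
    (x : Fin n → ℝ)
    (hx : ∀ i : Fin n, x i =
      if (i : ℕ) < n' then
        min 1 (max 0
          ((b - ∑ j ∈ Finset.univ.filter (fun j : Fin n => (j : ℕ) < (i : ℕ)), a j) / a i))
      else 0) :
    ((∀ i, 0 ≤ x i ∧ x i ≤ 1) ∧ ∑ i, a i * x i ≤ b) ∧
      ∀ y : Fin n → ℝ, (∀ i, 0 ≤ y i ∧ y i ≤ 1) → ∑ i, a i * y i ≤ b →
        ∑ i, c i * y i ≤ ∑ i, c i * x i := by
  classical
  set F : ℕ → ℝ := fun k => ∑ j ∈ Finset.univ.filter (fun j : Fin n => (j : ℕ) < k), a j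
    with hFdef
  -- basic bounds on x
  have hx01 : ∀ i, 0 ≤ x i ∧ x i ≤ 1 := by
    intro i
    rw [hx i]
    split
    · exact ⟨le_min zero_le_one (le_max_left _ _), min_le_left _ _⟩
    · exact ⟨le_refl _, zero_le_one⟩
  have hF0 : F 0 = 0 := by simp [hFdef]
  have hFs : ∀ (m : ℕ) (hm : m < n), F (m + 1) = F m + a ⟨m, hm⟩ := by
    intro m hm
    have hins : Finset.univ.filter (fun j : Fin n => (j : ℕ) < m + 1)
        = insert (⟨m, hm⟩ : Fin n) (Finset.univ.filter (fun j : Fin n => (j : ℕ) < m)) := by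
      ext j
      simp only [Finset.mem_insert, Finset.mem_filter, Finset.mem_univ, true_and, Fin.ext_iff]
      omega
    simp only [hFdef]
    rw [hins, Finset.sum_insert (by simp)]
    ring
  have hFmono : ∀ {m m' : ℕ}, m ≤ m' → F m ≤ F m' := by
    intro m m' h
    apply Finset.sum_le_sum_of_subset_of_nonneg
    · intro j hj
      simp only [Finset.mem_filter, Finset.mem_univ, true_and] at *
      omega
    · intro j _ _
      exact (ha j).le
  have hFn : F n = ∑ i, a i := by
    simp only [hFdef]
    rw [Finset.filter_true_of_mem (fun i _ => i.isLt)]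
  -- a i * x i in closed form
  have haxi : ∀ i : Fin n, a i * x i
      = if (i : ℕ) < n' then min (a i) (max 0 (b - F (i : ℕ))) else 0 := by
    intro i
    rw [hx i]
    split
    · have h1 : a i * ((b - F (i : ℕ)) / a i) = b - F (i : ℕ) := by
        field_simp
        rw [mul_comm, mul_div_assoc, div_self (ne_of_gt (ha i)), mul_one]
      rw [mul_min_of_nonneg _ _ (ha i).le, mul_max_of_nonneg _ _ (ha i).le, mul_one, mul_zero, h1]
    · rw [mul_zero]
  -- telescoping identity
  have hT : ∀ k : ℕ,
      (∑ i ∈ Finset.univ.filter (fun i : Fin n => (i : ℕ) < k), a i * x i)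
        = b - max 0 (b - F (min k n')) := by
    intro k
    induction k with
    | zero =>
      simp [hF0, max_eq_right hb]
    | succ k ih =>
      by_cases hk : k < n
      · have hins : Finset.univ.filter (fun j : Fin n => (j : ℕ) < k + 1)
            = insert (⟨k, hk⟩ : Fin n) (Finset.univ.filter (fun j : Fin n => (j : ℕ) < k)) := by
          ext j
          simp only [Finset.mem_insert, Finset.mem_filter, Finset.mem_univ, true_and, Fin.ext_iff]
          omega
        rw [hins, Finset.sum_insert (by simp), ih]
        by_cases hk' : k < n'
        · rw [haxi ⟨k, hk⟩, if_pos hk']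
          rw [min_eq_left hk'.le, min_eq_left (by omega : k + 1 ≤ n'), hFs k hk]
          set A := a (⟨k, hk⟩ : Fin n) with hA
          have hApos : 0 < A := ha _
          set t := b - F k with ht
          have hgoal : min A (max 0 t) + (b - max 0 t) = b - max 0 (b - (F k + A)) := by
            have h2 : b - (F k + A) = t - A := by ring
            rw [h2]
            rcases le_total t 0 with h | h
            · rw [max_eq_left h, max_eq_left (by linarith : t - A ≤ 0), min_eq_right hApos.le]
              ring
            · rw [max_eq_right h]
              rcases le_total t A with h3 | h3
              · rw [max_eq_left (by linarith : t - A ≤ 0), min_eq_right h3]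
                ring
              · rw [max_eq_right (by linarith : (0:ℝ) ≤ t - A), min_eq_left h3]
                ring
          linarith [hgoal]
        · rw [haxi ⟨k, hk⟩, if_neg hk']
          have h1 : min k n' = n' := by omega
          have h2 : min (k + 1) n' = n' := by omega
          rw [h1, h2]
          ring
      · have heq : Finset.univ.filter (fun j : Fin n => (j : ℕ) < k + 1)
            = Finset.univ.filter (fun j : Fin n => (j : ℕ) < k) := by
          ext j
          have := j.isLt
          simp only [Finset.mem_filter, Finset.mem_univ, true_and]
          omega
        have h1 : min k n' = n' := by omega
        have h2 : min (k + 1) n' = n' := by omega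
        rw [heq, ih, h1, h2]
  have hAx : ∑ i, a i * x i = b - max 0 (b - F n') := by
    have h := hT n
    rw [Finset.filter_true_of_mem (fun i _ => i.isLt), min_eq_right hn'] at h
    exact h
  have hfeas : ∑ i, a i * x i ≤ b := by
    rw [hAx]
    have := le_max_left (0:ℝ) (b - F n')
    linarith
  refine ⟨⟨hx01, hfeas⟩, ?_⟩
  intro y hy hay
  by_cases hcase : F n' ≤ b
  · -- b large enough: all positive items fully taken
    have hx1 : ∀ i : Fin n, (i : ℕ) < n' → x i = 1 := by
      intro i hi
      rw [hx i, if_pos hi]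
      have h1 : F ((i : ℕ) + 1) ≤ F n' := hFmono (by omega)
      have h2 : F ((i : ℕ) + 1) = F (i : ℕ) + a i := by
        rw [hFs (i : ℕ) i.isLt]
      have h3 : (1 : ℝ) ≤ (b - F (i : ℕ)) / a i := by
        rw [le_div_iff₀ (ha i)]
        rw [h2] at h1
        linarith
      rw [max_eq_right (by linarith : (0:ℝ) ≤ (b - F (i : ℕ)) / a i), min_eq_left h3]
    apply Finset.sum_le_sum
    intro i _
    by_cases hi : (i : ℕ) < n'
    · have hc : 0 < c i := by
        have h1 := hpos i hi
        have h2 : c i = (c i / a i) * a i := (div_mul_cancel₀ (c i) (ne_of_gt (ha i))).symm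
        rw [h2]
        exact mul_pos h1 (ha i)
      rw [hx1 i hi]
      exact mul_le_mul_of_nonneg_left (hy i).2 hc.le
    · have hc := hneg i (le_of_not_gt hi)
      rw [hx i, if_neg hi, mul_zero]
      exact mul_nonpos_of_nonpos_of_nonneg hc.le (hy i).1
  · push_neg at hcase
    have hn'pos : 0 < n' := by
      rcases Nat.eq_zero_or_pos n' with h | h
      · rw [h, hF0] at hcase; linarith
      · exact h
    have hP : ∃ m, b < F (m + 1) := ⟨n' - 1, by
      have e : n' - 1 + 1 = n' := by omega
      rw [e]; exact hcase⟩
    set k := Nat.find hP with hkdef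
    have hk1 : b < F (k + 1) := Nat.find_spec hP
    have hkmin : ∀ m, m < k → F (m + 1) ≤ b := fun m hm => le_of_not_gt (Nat.find_min hP hm)
    have hkb : F k ≤ b := by
      rcases Nat.eq_zero_or_pos k with h | h
      · rw [h, hF0]; exact hb
      · have e : k - 1 + 1 = k := by omega
        have := hkmin (k - 1) (by omega)
        rwa [e] at this
    have hkn' : k < n' := by
      by_contra h
      push_neg at h
      have := hFmono h
      linarith
    have hkn : k < n := lt_of_lt_of_le hkn' hn'
    set ik : Fin n := ⟨k, hkn⟩ with hikdef
    set lam := c ik / a ik with hlamdef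
    have hlampos : 0 < lam := hpos ik hkn'
    have hxlt : ∀ i : Fin n, (i : ℕ) < k → x i = 1 := by
      intro i hi
      rw [hx i, if_pos (by omega : (i : ℕ) < n')]
      have h1 : F ((i : ℕ) + 1) ≤ b := hkmin _ hi
      have h2 : F ((i : ℕ) + 1) = F (i : ℕ) + a i := by
        rw [hFs (i : ℕ) i.isLt]
      have h3 : (1 : ℝ) ≤ (b - F (i : ℕ)) / a i := by
        rw [le_div_iff₀ (ha i)]
        rw [h2] at h1
        linarith
      rw [max_eq_right (by linarith : (0:ℝ) ≤ (b - F (i : ℕ)) / a i), min_eq_left h3]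
    have hxk : x ik = (b - F k) / a ik := by
      rw [hx ik, if_pos (by simpa using hkn' : ((ik : ℕ) : ℕ) < n')]
      have h2 : F (k + 1) = F k + a ik := hFs k hkn
      have hle : (b - F k) / a ik ≤ 1 := by
        rw [div_le_one (ha ik)]
        rw [h2] at hk1
        linarith
      have hge : (0:ℝ) ≤ (b - F k) / a ik := div_nonneg (by linarith) (ha ik).le
      have : ((ik : Fin n) : ℕ) = k := rfl
      rw [this, max_eq_right hge, min_eq_right hle]
    have hxgt : ∀ i : Fin n, k < (i : ℕ) → x i = 0 := by
      intro i hi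
      rw [hx i]
      split
      · have h1 : F (k + 1) ≤ F (i : ℕ) := hFmono (by omega)
        have h2 : (b - F (i : ℕ)) / a i ≤ 0 :=
          div_nonpos_of_nonpos_of_nonneg (by linarith) (ha i).le
        rw [max_eq_left h2, min_eq_right zero_le_one]
      · rfl
    have hterm : ∀ i : Fin n, (c i - lam * a i) * y i ≤ (c i - lam * a i) * x i := by
      intro i
      rcases lt_trichotomy (i : ℕ) k with h | h | h
      · have hratio : lam < c i / a i := hsort i ik h hkn'
        have hcoef : 0 < c i - lam * a i := by
          have := (lt_div_iff₀ (ha i)).mp hratio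
          linarith
        rw [hxlt i h]
        calc (c i - lam * a i) * y i ≤ (c i - lam * a i) * 1 :=
              mul_le_mul_of_nonneg_left (hy i).2 hcoef.le
          _ = _ := by ring
      · have hieq : i = ik := Fin.ext h
        have hz : c i - lam * a i = 0 := by
          rw [hieq, hlamdef, div_mul_cancel₀ _ (ne_of_gt (ha ik)), sub_self]
        rw [hz]
        simp
      · have hcoef : c i - lam * a i ≤ 0 := by
          by_cases hi' : (i : ℕ) < n'
          · have hratio : c i / a i < lam := hsort ik i h hi'
            have := (div_lt_iff₀ (ha i)).mp hratio
            linarith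
          · have h1 := hneg i (le_of_not_gt hi')
            nlinarith [ha i, hlampos]
        rw [hxgt i h, mul_zero]
        exact mul_nonpos_of_nonpos_of_nonneg hcoef (hy i).1
    have hAxb : ∑ i, a i * x i = b := by
      rw [hAx, max_eq_left (by linarith : b - F n' ≤ 0)]
      ring
    have hsum : ∑ i, (c i - lam * a i) * y i ≤ ∑ i, (c i - lam * a i) * x i :=
      Finset.sum_le_sum (fun i _ => hterm i)
    have expand : ∀ z : Fin n → ℝ,
        ∑ i, c i * z i = ∑ i, (c i - lam * a i) * z i + lam * ∑ i, a i * z i := by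
      intro z
      rw [Finset.mul_sum, ← Finset.sum_add_distrib]
      apply Finset.sum_congr rfl
      intro i _
      ring
    rw [expand y, expand x, hAxb]
    have hlamle : lam * ∑ i, a i * y i ≤ lam * b := mul_le_mul_of_nonneg_left hay hlampos.le
    linarith
end

section
/- Let n ∈ ℕ, let a ∈ ℝⁿ with aᵢ > 0 for all i, and let c ∈ ℝⁿ be such that cᵢ ≠ 0 for all i and cᵢ/aᵢ ≠ cⱼ/aⱼ for all i ≠ j. Then for every b ∈ [0, Σ_{i=1}^n aᵢ], the continuous knapsack problem max{cᵀx : aᵀx ≤ b, x ∈ [0,1]ⁿ} has a unique optimal solution. -/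
private lemma knap_sum_one {n : ℕ} (f g : Fin n → ℝ) (k : Fin n) (δ : ℝ) :
    ∑ t, f t * (g t + if t = k then δ else 0) = (∑ t, f t * g t) + f k * δ := by
  have h : ∀ t, f t * (g t + if t = k then δ else 0)
      = f t * g t + (if t = k then f k * δ else 0) := by
    intro t; by_cases h : t = k <;> simp [h] <;> ring
  rw [Finset.sum_congr rfl fun t _ => h t, Finset.sum_add_distrib]
  simp [Finset.sum_ite_eq']

private lemma knap_sum_two {n : ℕ} (f g : Fin n → ℝ) {i j : Fin n} (hij : i ≠ j) (A B : ℝ) :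
    ∑ t, f t * (g t + if t = i then A else if t = j then B else 0)
      = (∑ t, f t * g t) + (f i * A + f j * B) := by
  have h : ∀ t, f t * (g t + if t = i then A else if t = j then B else 0)
      = f t * g t + ((if t = i then f i * A else 0) + (if t = j then f j * B else 0)) := by
    intro t
    rcases eq_or_ne t i with rfl | h1
    · simp only [if_pos rfl, if_neg hij, if_true]; ring
    · rcases eq_or_ne t j with rfl | h2
      · simp only [if_neg h1, if_pos rfl, if_true]; ring
      · simp only [if_neg h1, if_neg h2]; ring
  rw [Finset.sum_congr rfl fun t _ => h t, Finset.sum_add_distrib, Finset.sum_add_distrib]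
  simp [Finset.sum_ite_eq']

/-- If all profit ratios `c i / a i` are pairwise distinct and all item values are
nonzero, then for every capacity `b ∈ [0, Σ aᵢ]` the continuous knapsack problem
has a unique optimal solution. -/
theorem stmt_1 (n : ℕ) (a c : Fin n → ℝ) (ha : ∀ i, 0 < a i)
    (hc0 : ∀ i, c i ≠ 0)
    (hcd : ∀ i j : Fin n, i ≠ j → c i / a i ≠ c j / a j)
    (b : ℝ) (hb : 0 ≤ b) (hbA : b ≤ ∑ i, a i) :
    ∃! x : Fin n → ℝ,
      (∀ i, 0 ≤ x i ∧ x i ≤ 1) ∧ ∑ i, a i * x i ≤ b ∧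
        ∀ y : Fin n → ℝ, (∀ i, 0 ≤ y i ∧ y i ≤ 1) → ∑ i, a i * y i ≤ b →
          ∑ i, c i * y i ≤ ∑ i, c i * x i := by
  classical
  set f : (Fin n → ℝ) → ℝ := fun x => ∑ i, c i * x i with hf
  set S : Set (Fin n → ℝ) := {x | (∀ i, 0 ≤ x i ∧ x i ≤ 1) ∧ ∑ i, a i * x i ≤ b} with hSdef
  -- Existence
  have hScomp : IsCompact S := by
    have h1 : S = (Set.univ.pi fun _ : Fin n => Set.Icc (0:ℝ) 1) ∩ {x | ∑ i, a i * x i ≤ b} := by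
      ext x
      simp only [hSdef, Set.mem_setOf_eq, Set.mem_inter_iff, Set.mem_univ_pi, Set.mem_Icc]
    rw [h1]
    exact (isCompact_univ_pi fun _ => isCompact_Icc).inter_right
      (isClosed_le (continuous_finset_sum _ fun i _ => continuous_const.mul (continuous_apply i))
        continuous_const)
  have hS0 : (0 : Fin n → ℝ) ∈ S := by
    refine ⟨fun i => ⟨le_refl 0, zero_le_one⟩, ?_⟩
    simpa using hb
  have hfc : ContinuousOn f S :=
    (continuous_finset_sum _ fun i _ => continuous_const.mul (continuous_apply i)).continuousOn
  obtain ⟨x, hxS, hxmax⟩ := hScomp.exists_isMaxOn ⟨0, hS0⟩ hfc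
  refine ⟨x, ⟨hxS.1, hxS.2, fun y hy1 hy2 => isMaxOn_iff.mp hxmax y (⟨hy1, hy2⟩ : y ∈ S)⟩, ?_⟩
  -- Uniqueness
  intro y hy
  by_contra hne
  obtain ⟨hy1, hy2, hymax⟩ := hy
  have hyS : y ∈ S := ⟨hy1, hy2⟩
  have hcxy : ∑ i, c i * y i = ∑ i, c i * x i :=
    le_antisymm (isMaxOn_iff.mp hxmax y hyS) (hymax x hxS.1 hxS.2)
  obtain ⟨k, hk⟩ : ∃ k, x k ≠ y k := by
    by_contra h'; push_neg at h'; exact hne (funext fun i => (h' i).symm)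
  set z : Fin n → ℝ := fun i => (x i + y i) / 2 with hzd
  have hz : ∀ i, z i = (x i + y i) / 2 := fun i => rfl
  have hz1 : ∀ i, 0 ≤ z i ∧ z i ≤ 1 := fun i => by
    have h1 := hxS.1 i; have h2 := hy1 i
    exact ⟨by rw [hz i]; linarith [h1.1, h2.1], by rw [hz i]; linarith [h1.2, h2.2]⟩
  have hza : ∑ i, a i * z i = ((∑ i, a i * x i) + ∑ i, a i * y i) / 2 := by
    rw [← Finset.sum_add_distrib, Finset.sum_div]
    exact Finset.sum_congr rfl fun i _ => by rw [hz i]; ring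
  have hzc : ∑ i, c i * z i = ∑ i, c i * x i := by
    have : ∑ i, c i * z i = ((∑ i, c i * x i) + ∑ i, c i * y i) / 2 := by
      rw [← Finset.sum_add_distrib, Finset.sum_div]
      exact Finset.sum_congr rfl fun i _ => by rw [hz i]; ring
    rw [this, hcxy]; ring
  have hzle : ∑ i, a i * z i ≤ b := by rw [hza]; linarith [hxS.2, hy2]
  -- Step 1: capacity is tight at z
  have hzb : ∑ i, a i * z i = b := by
    by_contra h
    have hlt : ∑ i, a i * z i < b := lt_of_le_of_ne hzle h
    have hzk0 : 0 < z k := by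
      have h1 := (hxS.1 k).1; have h2 := (hy1 k).1
      rw [hz k]; rcases lt_or_gt_of_ne hk with h' | h' <;> linarith
    have hzk1 : z k < 1 := by
      have h1 := (hxS.1 k).2; have h2 := (hy1 k).2
      rw [hz k]; rcases lt_or_gt_of_ne hk with h' | h' <;> linarith
    set δ : ℝ := min (min (z k) (1 - z k)) ((b - ∑ i, a i * z i) / a k) with hδdef
    have hδ0 : 0 < δ :=
      lt_min (lt_min hzk0 (by linarith)) (div_pos (by linarith) (ha k))
    have hδzk : δ ≤ z k := le_trans (min_le_left _ _) (min_le_left _ _)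
    have hδzk1 : δ ≤ 1 - z k := le_trans (min_le_left _ _) (min_le_right _ _)
    have hδcap : a k * δ ≤ b - ∑ i, a i * z i := by
      have h1 : δ ≤ (b - ∑ i, a i * z i) / a k := min_le_right _ _
      calc a k * δ ≤ a k * ((b - ∑ i, a i * z i) / a k) :=
            mul_le_mul_of_nonneg_left h1 (ha k).le
        _ = b - ∑ i, a i * z i := by rw [mul_comm, div_mul_cancel₀ _ (ha k).ne']
    set s : ℝ := if 0 < c k then 1 else -1 with hsdef
    have hsone : s = 1 ∨ s = -1 := by
      rw [hsdef]; split <;> simp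
    have hs : s * c k = |c k| := by
      rw [hsdef]; split
      · rw [one_mul, abs_of_pos ‹_›]
      · rw [abs_of_neg (lt_of_le_of_ne (not_lt.mp ‹_›) (hc0 k)), neg_one_mul]
    set w : Fin n → ℝ := fun t => z t + (if t = k then s * δ else 0) with hwdef
    have hw : ∀ t, w t = z t + (if t = k then s * δ else 0) := fun _ => rfl
    have hwa : ∑ t, a t * w t = (∑ t, a t * z t) + a k * (s * δ) := knap_sum_one a z k (s * δ)
    have hwc : ∑ t, c t * w t = (∑ t, c t * z t) + c k * (s * δ) := knap_sum_one c z k (s * δ)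
    have hsδ : -δ ≤ s * δ ∧ s * δ ≤ δ := by
      rcases hsone with h' | h' <;> rw [h'] <;> constructor <;> linarith
    have hwS : w ∈ S := by
      refine ⟨fun t => ?_, ?_⟩
      · by_cases ht : t = k
        · rw [hw t, if_pos ht, ht]
          constructor <;> linarith [hsδ.1, hsδ.2, hδzk, hδzk1]
        · rw [hw t, if_neg ht, add_zero]; exact hz1 t
      · rw [hwa]
        have : a k * (s * δ) ≤ a k * δ := mul_le_mul_of_nonneg_left hsδ.2 (ha k).le
        linarith
    have hle : (∑ t, c t * w t) ≤ ∑ t, c t * x t := isMaxOn_iff.mp hxmax w hwS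
    have habs : 0 < |c k| := abs_pos.2 (hc0 k)
    have hck : c k * (s * δ) = |c k| * δ := by rw [← hs]; ring
    rw [hwc, hck, hzc] at hle
    linarith [mul_pos habs hδ0]
  have hxb : ∑ i, a i * x i = b := by linarith [hxS.2, hy2, hza.symm.trans hzb]
  have hyb : ∑ i, a i * y i = b := by linarith [hxS.2, hy2, hza.symm.trans hzb]
  have hdsum : ∑ t, a t * (y t - x t) = 0 := by
    have h : ∑ t, a t * (y t - x t) = (∑ t, a t * y t) - ∑ t, a t * x t := by
      rw [← Finset.sum_sub_distrib]
      exact Finset.sum_congr rfl fun t _ => by ring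
    rw [h, hxb, hyb]; ring
  have hkey : ∀ u v : Fin n → ℝ, (∑ t, a t * (v t - u t)) = 0 → (∃ t, u t ≠ v t) →
      ∃ t, u t < v t := by
    rintro u v hsum ⟨t0, ht0⟩
    by_contra h; push_neg at h
    have ht0' : v t0 < u t0 := (h t0).lt_of_ne fun e => ht0 e.symm
    have hlt : ∑ t, a t * (v t - u t) < ∑ _t : Fin n, (0:ℝ) :=
      Finset.sum_lt_sum
        (fun t _ => mul_nonpos_of_nonneg_of_nonpos (ha t).le (by linarith [h t]))
        ⟨t0, Finset.mem_univ _, mul_neg_of_pos_of_neg (ha t0) (by linarith)⟩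
    simp only [Finset.sum_const_zero] at hlt
    linarith
  obtain ⟨i, hi⟩ := hkey x y hdsum ⟨k, hk⟩
  have hdsum' : ∑ t, a t * (x t - y t) = 0 := by
    have h : ∑ t, a t * (x t - y t) = -∑ t, a t * (y t - x t) := by
      rw [← Finset.sum_neg_distrib]
      exact Finset.sum_congr rfl fun t _ => by ring
    rw [h, hdsum]; ring
  obtain ⟨j, hj⟩ := hkey y x hdsum' ⟨k, fun e => hk e.symm⟩
  have hij : i ≠ j := by rintro rfl; linarith
  have hzi0 : 0 < z i := by
    have := (hxS.1 i).1; have := (hy1 i).1; rw [hz i]; linarith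
  have hzi1 : z i < 1 := by
    have := (hxS.1 i).2; have := (hy1 i).2; rw [hz i]; linarith
  have hzj0 : 0 < z j := by
    have := (hxS.1 j).1; have := (hy1 j).1; rw [hz j]; linarith
  have hzj1 : z j < 1 := by
    have := (hxS.1 j).2; have := (hy1 j).2; rw [hz j]; linarith
  set v : ℝ := c i * a j - c j * a i with hvdef
  have hv : v ≠ 0 := by
    intro h
    apply hcd i j hij
    rw [div_eq_div_iff (ha i).ne' (ha j).ne']
    have : c i * a j = c j * a i := by rw [hvdef] at h; linarith
    linarith
  set s : ℝ := if 0 < v then 1 else -1 with hsdef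
  have hsone : s = 1 ∨ s = -1 := by rw [hsdef]; split <;> simp
  have hs : s * v = |v| := by
    rw [hsdef]; split
    · rw [one_mul, abs_of_pos ‹_›]
    · rw [abs_of_neg (lt_of_le_of_ne (not_lt.mp ‹_›) hv), neg_one_mul]
  set M : ℝ := max (a i) (a j) with hMdef
  have hM : 0 < M := lt_of_lt_of_le (ha i) (le_max_left _ _)
  set m : ℝ := min (min (z i) (1 - z i)) (min (z j) (1 - z j)) with hmdef
  have hm : 0 < m := lt_min (lt_min hzi0 (by linarith)) (lt_min hzj0 (by linarith))
  set δ : ℝ := m / M with hδdef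
  have hδ0 : 0 < δ := div_pos hm hM
  have hδi : δ * a i ≤ m := by
    calc δ * a i ≤ δ * M := mul_le_mul_of_nonneg_left (le_max_left _ _) hδ0.le
      _ = m := by rw [hδdef]; field_simp
  have hδj : δ * a j ≤ m := by
    calc δ * a j ≤ δ * M := mul_le_mul_of_nonneg_left (le_max_right _ _) hδ0.le
      _ = m := by rw [hδdef]; field_simp
  set A : ℝ := s * δ * a j with hAdef
  set B : ℝ := -(s * δ * a i) with hBdef
  have hAbd : -m ≤ A ∧ A ≤ m := by
    have h1 : 0 ≤ δ * a j := mul_nonneg hδ0.le (ha j).le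
    rcases hsone with h' | h' <;> rw [hAdef, h'] <;> constructor <;> linarith [h1, hδj, hm]
  have hBbd : -m ≤ B ∧ B ≤ m := by
    have h1 : 0 ≤ δ * a i := mul_nonneg hδ0.le (ha i).le
    rcases hsone with h' | h' <;> rw [hBdef, h'] <;> constructor <;> linarith [h1, hδi, hm]
  have hmzi : m ≤ z i := le_trans (min_le_left _ _) (min_le_left _ _)
  have hmzi1 : m ≤ 1 - z i := le_trans (min_le_left _ _) (min_le_right _ _)
  have hmzj : m ≤ z j := le_trans (min_le_right _ _) (min_le_left _ _)
  have hmzj1 : m ≤ 1 - z j := le_trans (min_le_right _ _) (min_le_right _ _)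
  set w : Fin n → ℝ := fun t => z t + (if t = i then A else if t = j then B else 0) with hwdef
  have hw : ∀ t, w t = z t + (if t = i then A else if t = j then B else 0) := fun _ => rfl
  have hwa : ∑ t, a t * w t = (∑ t, a t * z t) + (a i * A + a j * B) := knap_sum_two a z hij A B
  have hwc : ∑ t, c t * w t = (∑ t, c t * z t) + (c i * A + c j * B) := knap_sum_two c z hij A B
  have hwS : w ∈ S := by
    refine ⟨fun t => ?_, ?_⟩
    · by_cases h1 : t = i
      · rw [hw t, if_pos h1, h1]
        constructor <;> linarith [hAbd.1, hAbd.2, hmzi, hmzi1]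
      · by_cases h2 : t = j
        · rw [hw t, if_neg h1, if_pos h2, h2]
          constructor <;> linarith [hBbd.1, hBbd.2, hmzj, hmzj1]
        · rw [hw t, if_neg h1, if_neg h2, add_zero]; exact hz1 t
    · rw [hwa]
      have : a i * A + a j * B = 0 := by rw [hAdef, hBdef]; ring
      linarith [hzb]
  have hle : (∑ t, c t * w t) ≤ ∑ t, c t * x t := isMaxOn_iff.mp hxmax w hwS
  have hobj : c i * A + c j * B = δ * |v| := by
    rw [hAdef, hBdef, ← hs, hvdef]; ring
  have habs : 0 < |v| := abs_pos.2 hv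
  rw [hwc, hobj, hzc] at hle
  linarith [mul_pos hδ0 habs]
end

section
/- Let n ∈ ℕ, let a ∈ ℝⁿ with aᵢ > 0, let c ∈ ℝⁿ and n' ∈ {0,…,n} satisfy c₁/a₁ > … > c_{n'}/a_{n'} > 0 and cᵢ < 0 for i > n'. Let d ∈ ℝⁿ, δ ≥ 0, and define x(b) ∈ ℝⁿ by xᵢ(b) = min(1, max(0, (b − Σ_{j=1}^{i−1} aⱼ)/aᵢ)) for i ≤ n' and xᵢ(b) = 0 for i > n', and f(b) := dᵀx(b) − δb. Then for any 0 ≤ b⁻ ≤ b⁺ ≤ Σ_{i=1}^n aᵢ, the maximum of f over [b⁻, b⁺] is attained at a point of the finite set {b⁻, b⁺} ∪ { Σ_{j=1}^{i} aⱼ : i ∈ {1,…,n'}, b⁻ ≤ Σ_{j=1}^{i} aⱼ ≤ b⁺ }. -/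
open scoped Classical

/-- The leader's objective `f(b) = dᵀx(b) − δb` of the deterministic bilevel
continuous knapsack problem attains its maximum over `[b⁻, b⁺]` at one of the
boundary points or at a feasible prefix sum `Σ_{j ≤ i} aⱼ` with `i < n'`. -/
theorem stmt_2 (n : ℕ) (a c d : Fin n → ℝ) (ha : ∀ i, 0 < a i)
    (n' : ℕ) (hn' : n' ≤ n)
    (hsort : ∀ i j : Fin n, (i : ℕ) < (j : ℕ) → (j : ℕ) < n' → c j / a j < c i / a i)
    (hpos : ∀ i : Fin n, (i : ℕ) < n' → 0 < c i / a i)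
    (hneg : ∀ i : Fin n, n' ≤ (i : ℕ) → c i < 0)
    (δ : ℝ) (hδ : 0 ≤ δ)
    (bm bp : ℝ) (hbm : 0 ≤ bm) (hbmp : bm ≤ bp) (hbp : bp ≤ ∑ i, a i)
    (x : ℝ → Fin n → ℝ)
    (hx : ∀ (b : ℝ) (i : Fin n), x b i =
      if (i : ℕ) < n' then
        min 1 (max 0
          ((b - ∑ j ∈ Finset.univ.filter (fun j : Fin n => (j : ℕ) < (i : ℕ)), a j) / a i))
      else 0)
    (f : ℝ → ℝ) (hf : ∀ b : ℝ, f b = (∑ i, d i * x b i) - δ * b) :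
    ∃ bstar ∈ Set.Icc bm bp,
      (bstar = bm ∨ bstar = bp ∨
        ∃ i : Fin n, (i : ℕ) < n' ∧
          bstar = ∑ j ∈ Finset.univ.filter (fun j : Fin n => (j : ℕ) ≤ (i : ℕ)), a j) ∧
      ∀ b ∈ Set.Icc bm bp, f b ≤ f bstar := by
  -- prefix sums
  set Q : ℕ → ℝ := fun k => ∑ j ∈ Finset.univ.filter (fun j : Fin n => (j : ℕ) < k), a j
    with hQdef
  have hQsucc : ∀ (k : ℕ) (hk : k < n), Q (k+1) = Q k + a ⟨k, hk⟩ := by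
    intro k hk
    have : Finset.univ.filter (fun j : Fin n => (j : ℕ) < k+1)
        = insert (⟨k, hk⟩ : Fin n) (Finset.univ.filter (fun j : Fin n => (j : ℕ) < k)) := by
      ext j
      simp [Nat.lt_succ_iff_lt_or_eq, Fin.ext_iff]
      constructor <;> intro h <;> omega
    simp only [hQdef]
    rw [this, Finset.sum_insert (by simp)]
    ring
  have hQ0 : Q 0 = 0 := by simp [hQdef]
  have hxQ : ∀ (b : ℝ) (i : Fin n), x b i =
      if (i : ℕ) < n' then min 1 (max 0 ((b - Q (i : ℕ)) / a i)) else 0 := by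
    intro b i; rw [hx]
  -- continuity of f
  have hfc : Continuous f := by
    have hfe : f = fun b => (∑ i, d i * x b i) - δ * b := funext hf
    rw [hfe]
    apply Continuous.sub
    · apply continuous_finset_sum
      intro i _
      apply Continuous.mul continuous_const
      have : (fun b => x b i)
          = fun b => if (i : ℕ) < n' then min 1 (max 0 ((b - Q (i : ℕ)) / a i)) else 0 :=
        funext fun b => hxQ b i
      rw [this]
      by_cases h : (i : ℕ) < n' <;> simp only [h, if_true, if_false]
      · fun_prop
      · exact continuous_const
    · fun_prop
  -- maximum exists
  obtain ⟨b0, hb0, hmax⟩ := isCompact_Icc.exists_isMaxOn (Set.nonempty_Icc.2 hbmp)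
    hfc.continuousOn
  -- candidate set
  set S : Finset ℝ := ((Finset.range n').image fun k => Q (k+1)).filter
    (fun t => bm ≤ t ∧ t ≤ bp) with hSdef
  set T : Finset ℝ := insert bm (insert bp S) with hTdef
  have hTIcc : ∀ t ∈ T, t ∈ Set.Icc bm bp := by
    intro t ht
    simp only [hTdef, Finset.mem_insert, hSdef, Finset.mem_filter] at ht
    rcases ht with rfl | rfl | ⟨_, h1, h2⟩
    · exact ⟨le_refl _, hbmp⟩
    · exact ⟨hbmp, le_refl _⟩
    · exact ⟨h1, h2⟩
  have hTform : ∀ t ∈ T, t = bm ∨ t = bp ∨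
      ∃ i : Fin n, (i : ℕ) < n' ∧
        t = ∑ j ∈ Finset.univ.filter (fun j : Fin n => (j : ℕ) ≤ (i : ℕ)), a j := by
    intro t ht
    simp only [hTdef, Finset.mem_insert, hSdef, Finset.mem_filter, Finset.mem_image,
      Finset.mem_range] at ht
    rcases ht with rfl | rfl | ⟨⟨k, hk, rfl⟩, _, _⟩
    · exact Or.inl rfl
    · exact Or.inr (Or.inl rfl)
    · refine Or.inr (Or.inr ⟨⟨k, lt_of_lt_of_le hk hn'⟩, hk, ?_⟩)
      simp only [hQdef]
      apply Finset.sum_congr _ (fun _ _ => rfl)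
      ext j
      simp [Nat.lt_succ_iff]
    -- done
  have hbmT : bm ∈ T := by simp [hTdef]
  have hbpT : bp ∈ T := by simp [hTdef]
  -- left and right neighbors of b0 in T
  set Tl : Finset ℝ := T.filter (fun t => t ≤ b0) with hTldef
  set Tr : Finset ℝ := T.filter (fun t => b0 ≤ t) with hTrdef
  have hTlne : Tl.Nonempty := ⟨bm, by simp [hTldef, Finset.mem_filter, hbmT, hb0.1]⟩
  have hTrne : Tr.Nonempty := ⟨bp, by simp [hTrdef, Finset.mem_filter, hbpT, hb0.2]⟩
  set l : ℝ := Tl.max' hTlne with hldef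
  set r : ℝ := Tr.min' hTrne with hrdef
  have hlmem : l ∈ Tl := Tl.max'_mem hTlne
  have hrmem : r ∈ Tr := Tr.min'_mem hTrne
  have hlT : l ∈ T := (Finset.mem_filter.1 hlmem).1
  have hrT : r ∈ T := (Finset.mem_filter.1 hrmem).1
  have hlb0 : l ≤ b0 := (Finset.mem_filter.1 hlmem).2
  have hb0r : b0 ≤ r := (Finset.mem_filter.1 hrmem).2
  have hbml : bm ≤ l := Tl.le_max' bm (by simp [hTldef, Finset.mem_filter, hbmT, hb0.1])
  have hrbp : r ≤ bp := Tr.min'_le bp (by simp [hTrdef, Finset.mem_filter, hbpT, hb0.2])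
  -- breakpoints don't lie strictly between l and r
  have hbreak : ∀ k : ℕ, k ≤ n' → Q k ≤ l ∨ r ≤ Q k := by
    intro k hk
    match k with
    | 0 => exact Or.inl (by rw [hQ0]; linarith)
    | (m+1) =>
      by_cases h1 : Q (m+1) < bm
      · exact Or.inl (by linarith)
      by_cases h2 : bp < Q (m+1)
      · exact Or.inr (by linarith)
      have hmemT : Q (m+1) ∈ T := by
        simp only [hTdef, Finset.mem_insert, hSdef, Finset.mem_filter, Finset.mem_image,
          Finset.mem_range]
        exact Or.inr (Or.inr ⟨⟨m, hk, rfl⟩, le_of_not_gt h1, le_of_not_gt h2⟩)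
      by_cases h3 : Q (m+1) ≤ b0
      · exact Or.inl (Tl.le_max' _ (by simp [hTldef, Finset.mem_filter, hmemT, h3]))
      · exact Or.inr (Tr.min'_le _
          (by simp [hTrdef, Finset.mem_filter, hmemT, le_of_lt (lt_of_not_ge h3)]))
  -- f b0 ≤ max (f l) (f r)
  have hkey : f b0 ≤ max (f l) (f r) := by
    rcases eq_or_lt_of_le (le_trans hlb0 hb0r) with heq | hlr
    · have : b0 = l := le_antisymm (heq ▸ hb0r) hlb0
      rw [← this]; exact le_max_left _ _
    · set t : ℝ := (b0 - l) / (r - l) with htdef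
      have hrl : 0 < r - l := by linarith
      have ht0 : 0 ≤ t := div_nonneg (by linarith) (le_of_lt hrl)
      have ht1 : t ≤ 1 := by
        rw [htdef, div_le_one hrl]; linarith
      have hb0eq : b0 = l + t * (r - l) := by
        rw [htdef, div_mul_cancel₀ _ hrl.ne']; ring
      -- per-coordinate affine combination
      have hcoord : ∀ i : Fin n, x b0 i = x l i + t * (x r i - x l i) := by
        intro i
        by_cases hi : (i : ℕ) < n'
        · have hai := ha i
          set P : ℝ := Q (i : ℕ) with hPdef
          have hQi1 : Q ((i : ℕ) + 1) = P + a i := by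
            rw [hQsucc (i : ℕ) i.isLt]
          have hb1 := hbreak (i : ℕ) (le_of_lt hi)
          have hb2 := hbreak ((i : ℕ) + 1) hi
          rw [hQi1] at hb2
          have hval : ∀ b : ℝ, x b i = min 1 (max 0 ((b - P) / a i)) := fun b => by
            rw [hxQ b i, if_pos hi]
          rcases hb1 with hb1 | hb1
          · rcases hb2 with hb2 | hb2
            · -- P + a i ≤ l : all ones
              have hone : ∀ b : ℝ, l ≤ b → x b i = 1 := by
                intro b hb
                rw [hval]
                have : (1 : ℝ) ≤ (b - P) / a i := by
                  rw [le_div_iff₀ hai]; linarith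
                rw [max_eq_right (by linarith), min_eq_left this]
              rw [hone b0 hlb0, hone l (le_refl _), hone r (by linarith)]
              ring
            · -- P ≤ l and r ≤ P + a i : linear piece
              have hlin : ∀ b : ℝ, l ≤ b → b ≤ r → x b i = (b - P) / a i := by
                intro b hbl hbr
                rw [hval]
                have h0 : (0 : ℝ) ≤ (b - P) / a i := div_nonneg (by linarith) (le_of_lt hai)
                have h1 : (b - P) / a i ≤ 1 := by
                  rw [div_le_one hai]; linarith
                rw [max_eq_right h0, min_eq_right h1]
              rw [hlin b0 hlb0 hb0r, hlin l (le_refl _) (le_of_lt hlr),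
                hlin r (le_of_lt hlr) (le_refl _), hb0eq]
              ring
          · -- r ≤ P : all zeros
            have hzero : ∀ b : ℝ, b ≤ r → x b i = 0 := by
              intro b hb
              rw [hval]
              have : (b - P) / a i ≤ 0 :=
                div_nonpos_of_nonpos_of_nonneg (by linarith) (le_of_lt hai)
              rw [max_eq_left this, min_eq_right (by norm_num)]
            rw [hzero b0 hb0r, hzero l (le_of_lt hlr), hzero r (le_refl _)]
            ring
        · have hzero : ∀ b : ℝ, x b i = 0 := fun b => by rw [hxQ b i, if_neg hi]
          rw [hzero, hzero, hzero]; ring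
      have hfcomb : f b0 = (1 - t) * f l + t * f r := by
        rw [hf, hf, hf]
        have : (∑ i, d i * x b0 i) = ∑ i, (d i * x l i + t * (d i * x r i - d i * x l i)) := by
          apply Finset.sum_congr rfl
          intro i _
          rw [hcoord i]; ring
        rw [this, Finset.sum_add_distrib, ← Finset.mul_sum]
        rw [Finset.sum_sub_distrib]
        rw [hb0eq]
        ring
      rw [hfcomb]
      have h1 := le_max_left (f l) (f r)
      have h2 := le_max_right (f l) (f r)
      nlinarith
  -- conclude
  rcases le_max_iff.1 hkey with hle | hle
  · exact ⟨l, hTIcc l hlT, hTform l hlT, fun b hb => le_trans (hmax hb) hle⟩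
  · exact ⟨r, hTIcc r hrT, hTform r hrT, fun b hb => le_trans (hmax hb) hle⟩
end

section
/- Let n ∈ ℕ and let a₁,…,aₙ be positive integers, let n' ∈ {0,…,n}, and define xᵢ(b) = min(1, max(0, (b − Σ_{j=1}^{i−1} aⱼ)/aᵢ)) for i ≤ n' and xᵢ(b) = 0 for i > n'. Then for every i ∈ {1,…,n} and every integer b with 1 ≤ b ≤ Σ_{j=1}^n aⱼ, the function xᵢ restricted to the interval [b−1, b] is affine. Consequently, for any d ∈ ℝⁿ and δ ∈ ℝ, the function f(b) = dᵀx(b) − δb is affine on each such interval [b−1, b]. -/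
open scoped Classical

lemma clamp_affine (S : ℝ) (hS : ∃ m : ℤ, S = m) (A : ℕ) (hA1 : 1 ≤ A)
    (b : ℕ) (hb : 1 ≤ b) :
    ∃ α β : ℝ, ∀ t ∈ Set.Icc ((b : ℝ) - 1) (b : ℝ),
      min 1 (max 0 ((t - S) / A)) = α * t + β := by
  obtain ⟨m, rfl⟩ := hS
  have hA0 : (0 : ℝ) < A := by exact_mod_cast hA1
  by_cases h1 : (b : ℝ) ≤ m
  · refine ⟨0, 0, fun t ht => ?_⟩
    have : (t - m) / A ≤ 0 := div_nonpos_of_nonpos_of_nonneg (by linarith [ht.2]) hA0.le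
    rw [max_eq_left this, min_eq_right (by norm_num)]; ring
  · by_cases h2 : (m : ℝ) + A ≤ (b : ℝ) - 1
    · refine ⟨0, 1, fun t ht => ?_⟩
      have h3 : 1 ≤ (t - m) / A := (one_le_div hA0).2 (by linarith [ht.1])
      rw [min_eq_left (le_trans h3 (le_max_right _ _))]; ring
    · -- here m < b and b - 1 < m + A; show interval within [m, m+A]
      push_neg at h1 h2
      have hbm : (m : ℝ) ≤ (b : ℝ) - 1 := by
        have : m < (b : ℤ) := by exact_mod_cast h1
        have : (m : ℝ) + 1 ≤ (b : ℝ) := by exact_mod_cast this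
        linarith
      refine ⟨1 / A, -(m : ℝ) / A, fun t ht => ?_⟩
      have hnn : 0 ≤ (t - m) / A := div_nonneg (by linarith [ht.1]) hA0.le
      have hbA : (b : ℝ) ≤ (m : ℝ) + A := by
        have : (b : ℤ) < m + A + 1 := by exact_mod_cast (by push_cast; linarith : ((b:ℝ)) < m + A + 1)
        have : (b : ℤ) ≤ m + A := by omega
        exact_mod_cast this
      have hle : (t - m) / A ≤ 1 := (div_le_one hA0).2 (by linarith [ht.2])
      rw [max_eq_right hnn, min_eq_right hle]
      field_simp
      ring

/-- With integer item sizes, each component `xᵢ` of the follower's optimal solution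
is affine on every interval `[b−1, b]` with integral endpoints `1 ≤ b ≤ Σ aⱼ`, and
consequently the leader's objective `f(b) = dᵀx(b) − δb` is affine on each such
interval as well. -/
theorem stmt_3 (n : ℕ) (a : Fin n → ℕ) (ha : ∀ i, 0 < a i)
    (n' : ℕ) (hn' : n' ≤ n)
    (x : ℝ → Fin n → ℝ)
    (hx : ∀ (b : ℝ) (i : Fin n), x b i =
      if (i : ℕ) < n' then
        min 1 (max 0
          ((b - ∑ j ∈ Finset.univ.filter (fun j : Fin n => (j : ℕ) < (i : ℕ)), (a j : ℝ)) /
            (a i : ℝ)))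
      else 0) :
    (∀ i : Fin n, ∀ b : ℕ, 1 ≤ b → b ≤ ∑ j, a j →
      ∃ α β : ℝ, ∀ t ∈ Set.Icc ((b : ℝ) - 1) (b : ℝ), x t i = α * t + β) ∧
    ∀ (d : Fin n → ℝ) (δ : ℝ), ∀ b : ℕ, 1 ≤ b → b ≤ ∑ j, a j →
      ∃ α β : ℝ, ∀ t ∈ Set.Icc ((b : ℝ) - 1) (b : ℝ),
        (∑ i, d i * x t i) - δ * t = α * t + β := by
  have key : ∀ i : Fin n, ∀ b : ℕ, 1 ≤ b → b ≤ ∑ j, a j →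
      ∃ α β : ℝ, ∀ t ∈ Set.Icc ((b : ℝ) - 1) (b : ℝ), x t i = α * t + β := by
    intro i b hb _
    by_cases hi : (i : ℕ) < n'
    · have hS : ∃ m : ℤ, (∑ j ∈ Finset.univ.filter (fun j : Fin n => (j : ℕ) < (i : ℕ)),
          (a j : ℝ)) = m := by
        refine ⟨∑ j ∈ Finset.univ.filter (fun j : Fin n => (j : ℕ) < (i : ℕ)), (a j : ℤ), ?_⟩
        push_cast; rfl
      have hA1 : 1 ≤ a i := ha i
      obtain ⟨α, β, hab⟩ := clamp_affine _ hS _ hA1 b hb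
      exact ⟨α, β, fun t ht => by rw [hx, if_pos hi]; exact hab t ht⟩
    · exact ⟨0, 0, fun t ht => by rw [hx, if_neg hi]; ring⟩
  refine ⟨key, fun d δ b hb hble => ?_⟩
  choose α β hab using fun i : Fin n => key i b hb hble
  refine ⟨(∑ i, d i * α i) - δ, ∑ i, d i * β i, fun t ht => ?_⟩
  have : ∀ i ∈ Finset.univ, d i * x t i = d i * (α i * t + β i) := fun i _ => by
    rw [hab i t ht]
  rw [Finset.sum_congr rfl this]
  simp only [mul_add, Finset.sum_add_distrib, sub_mul, Finset.sum_mul, mul_assoc]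
  ring
end

section
/- Let m ∈ ℕ, let a₁,…,aₘ be positive integers with A = Σ_{i=1}^m aᵢ, and let τ ∈ ℝ. For M ⊆ {1,…,m}, set s_M = Σ_{i∈M} aᵢ and define f_{M,τ} : ℝ → ℝ by f_{M,τ}(b) = (1+τ)·min(b, s_M) + (−1+τ)·max(b − s_M, 0). Define f̂_τ := (1/2)·f_{{1,…,m},τ} + 2^{−(m+1)} Σ_{M ⊆ {1,…,m}} f_{M,τ}. Then for every integer b with 1 ≤ b ≤ A, f̂_τ(b) − f̂_τ(b−1) = 1 + τ − 2^{−m} · #{x ∈ {0,1}^m : Σ_{i=1}^m aᵢxᵢ ≤ b − 1}. -/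
open scoped Classical

lemma diff_aux (τ : ℝ) (s b : ℕ) (hb : 1 ≤ b) :
    ((1 + τ) * min (b : ℝ) (s : ℝ) + (-1 + τ) * max ((b : ℝ) - s) 0)
      - ((1 + τ) * min ((b : ℝ) - 1) (s : ℝ) + (-1 + τ) * max ((b : ℝ) - 1 - s) 0)
    = (1 + τ) + (if s ≤ b - 1 then (-2 : ℝ) else 0) := by
  rcases le_or_gt b s with h | h
  · have h1 : (b : ℝ) ≤ s := by exact_mod_cast h
    have h2 : ¬ s ≤ b - 1 := by omega
    rw [min_eq_left h1, min_eq_left (by linarith), max_eq_right (by linarith),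
      max_eq_right (by linarith), if_neg h2]
    ring
  · have h1 : (s : ℝ) ≤ (b : ℝ) - 1 := by
      have : s + 1 ≤ b := h
      have := (Nat.cast_le (α := ℝ)).2 this
      push_cast at this; linarith
    have h2 : s ≤ b - 1 := by omega
    rw [min_eq_right (by linarith), min_eq_right h1, max_eq_left (by linarith),
      max_eq_left (by linarith), if_pos h2]
    ring

/-- The slope formula for the expected leader's objective in the #P-hardness
reduction from #Knapsack: for every integer capacity `1 ≤ b ≤ A`,
`f̂_τ(b) − f̂_τ(b−1) = 1 + τ − 2^{−m} · #{x ∈ {0,1}^m : Σ aᵢxᵢ ≤ b − 1}`. -/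
theorem stmt_4 (m : ℕ) (a : Fin m → ℕ) (ha : ∀ i, 0 < a i) (τ : ℝ)
    (A : ℕ) (hA : A = ∑ i, a i)
    (f : Finset (Fin m) → ℝ → ℝ)
    (hf : ∀ (M : Finset (Fin m)) (b : ℝ),
      f M b = (1 + τ) * min b (∑ i ∈ M, (a i : ℝ)) +
        (-1 + τ) * max (b - ∑ i ∈ M, (a i : ℝ)) 0)
    (fhat : ℝ → ℝ)
    (hfhat : ∀ b : ℝ, fhat b =
      (1 / 2) * f Finset.univ b +
        (2 : ℝ) ^ (-((m : ℤ) + 1)) * ∑ M : Finset (Fin m), f M b) :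
    ∀ b : ℕ, 1 ≤ b → b ≤ A →
      fhat b - fhat ((b : ℝ) - 1) =
        1 + τ - (2 : ℝ) ^ (-(m : ℤ)) *
          ((Finset.univ.filter
            (fun M : Finset (Fin m) => ∑ i ∈ M, a i ≤ b - 1)).card : ℝ) := by
  intro b hb1 hbA
  have key : ∀ M : Finset (Fin m),
      f M b - f M ((b : ℝ) - 1)
        = (1 + τ) + (if (∑ i ∈ M, a i) ≤ b - 1 then (-2 : ℝ) else 0) := by
    intro M
    rw [hf, hf]
    have hcast : (∑ i ∈ M, (a i : ℝ)) = ((∑ i ∈ M, a i : ℕ) : ℝ) := by push_cast; ring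
    rw [hcast]
    exact diff_aux τ _ b hb1
  have keyU : f Finset.univ b - f Finset.univ ((b : ℝ) - 1) = 1 + τ := by
    rw [key]
    have : ¬ (∑ i, a i) ≤ b - 1 := by omega
    rw [if_neg this]; ring
  set N := ((Finset.univ.filter
      (fun M : Finset (Fin m) => ∑ i ∈ M, a i ≤ b - 1)).card : ℝ)
  have hsum : (∑ M : Finset (Fin m), f M (b : ℝ)) - ∑ M : Finset (Fin m), f M ((b : ℝ) - 1)
      = (2 : ℝ) ^ m * (1 + τ) + (-2) * N := by
    rw [← Finset.sum_sub_distrib]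
    rw [Finset.sum_congr rfl fun M _ => key M]
    rw [Finset.sum_add_distrib, Finset.sum_const, ← Finset.sum_filter,
      Finset.sum_const]
    simp [N, Finset.card_univ, mul_comm]
    ring
  rw [hfhat, hfhat]
  have h2 : (2 : ℝ) ^ (-((m : ℤ) + 1)) = ((2 : ℝ) ^ m)⁻¹ / 2 := by
    rw [zpow_neg]
    rw [show ((m : ℤ) + 1) = (m : ℤ) + 1 from rfl]
    rw [zpow_add₀ (by norm_num : (2:ℝ) ≠ 0), zpow_natCast, zpow_one]
    field_simp
  have h3 : (2 : ℝ) ^ (-(m : ℤ)) = ((2 : ℝ) ^ m)⁻¹ := by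
    rw [zpow_neg, zpow_natCast]
  have hP : (2 : ℝ) ^ m ≠ 0 := by positivity
  have : (1/2) * f Finset.univ b + (2 : ℝ) ^ (-((m : ℤ)+1)) * ∑ M : Finset (Fin m), f M b
      - ((1/2) * f Finset.univ ((b:ℝ)-1) + (2 : ℝ) ^ (-((m : ℤ)+1)) * ∑ M : Finset (Fin m), f M ((b:ℝ)-1))
      = (1/2) * (f Finset.univ b - f Finset.univ ((b:ℝ)-1))
        + (2 : ℝ) ^ (-((m : ℤ)+1)) * ((∑ M : Finset (Fin m), f M (b:ℝ)) - ∑ M : Finset (Fin m), f M ((b:ℝ)-1)) := by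
    ring
  rw [this, keyU, hsum, h2, h3]
  field_simp
  ring
end

section
/- Let m ≥ 2 and let a₁,…,aₘ be positive integers; set a_{m+1} := Σ_{i=1}^m aᵢ and ε := 1/(2a_{m+1}). Let c₁,…,c_{m+1} be independent random variables, each uniformly distributed on the two-element set {ε, 1}. Define the random set I := {i ∈ {1,…,m} : cᵢ/aᵢ > c_{m+1}/a_{m+1}}. Then ℙ(I = {1,…,m}) = 1/2 + 2^{−(m+1)}, and ℙ(I = M) = 2^{−(m+1)} for every proper subset M ⊊ {1,…,m}. -/
open scoped Classical ENNReal
open MeasureTheory ProbabilityTheory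

/-- In the #P-hardness reduction with item values independently uniformly
distributed on the two-element set `{ε, 1}` with `ε = 1/(2a_{m+1})`, the random
set `I = {i ≤ m : cᵢ/aᵢ > c_{m+1}/a_{m+1}}` equals `{1,…,m}` with probability
`1/2 + 2^{−(m+1)}` and equals each proper subset with probability `2^{−(m+1)}`. -/
theorem stmt_5 {Ω : Type*} [MeasurableSpace Ω] (μ : Measure Ω) [IsProbabilityMeasure μ]
    (m : ℕ) (hm : 2 ≤ m) (a : Fin m → ℕ) (ha : ∀ i, 0 < a i)
    (A : ℕ) (hA : A = ∑ i, a i) (ε : ℝ) (hε : ε = 1 / (2 * (A : ℝ)))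
    (c : Fin (m + 1) → Ω → ℝ) (hmeas : ∀ i, Measurable (c i))
    (hind : iIndepFun c μ)
    (hdist : ∀ i, μ {ω | c i ω = ε} = 1 / 2 ∧ μ {ω | c i ω = 1} = 1 / 2) :
    μ {ω | Finset.univ.filter
        (fun i : Fin m =>
          c (Fin.last m) ω / (A : ℝ) < c (Fin.castSucc i) ω / (a i : ℝ)) = Finset.univ}
      = 1 / 2 + 2 ^ (-((m : ℤ) + 1)) ∧
    ∀ M : Finset (Fin m), M ≠ Finset.univ →
      μ {ω | Finset.univ.filter
          (fun i : Fin m =>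
            c (Fin.last m) ω / (A : ℝ) < c (Fin.castSucc i) ω / (a i : ℝ)) = M}
        = 2 ^ (-((m : ℤ) + 1)) := by
  classical
  haveI : Nontrivial (Fin m) := Fin.nontrivial_iff_two_le.mpr hm
  -- basic numeric facts
  have hA2 : 2 ≤ A := by
    subst hA
    calc 2 ≤ m := hm
    _ = ∑ _i : Fin m, 1 := by simp
    _ ≤ ∑ i, a i := Finset.sum_le_sum fun i _ => ha i
  have hAR : (0:ℝ) < A := by exact_mod_cast (by omega : 0 < A)
  have hεpos : 0 < ε := by rw [hε]; positivity
  have hεlt1 : ε < 1 := by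
    rw [hε, div_lt_one (by positivity)]
    have : (2:ℝ) ≤ A := by exact_mod_cast hA2
    linarith
  have hεne1 : ε ≠ 1 := ne_of_lt hεlt1
  have hlt : ∀ i : Fin m, a i < A := by
    intro i
    subst hA
    obtain ⟨j, hj⟩ := exists_ne i
    exact Finset.single_lt_sum hj (Finset.mem_univ i) (Finset.mem_univ j) (ha j)
      fun k _ _ => Nat.zero_le _
  have haiR : ∀ i : Fin m, (0:ℝ) < a i := fun i => by exact_mod_cast ha i
  have hltR : ∀ i : Fin m, (a i : ℝ) < A := fun i => by exact_mod_cast hlt i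
  -- the key real-number comparisons
  have h1 : ∀ i : Fin m, ε / A < ε / a i :=
    fun i => div_lt_div_of_pos_left hεpos (haiR i) (hltR i)
  have h2 : ∀ i : Fin m, ε / A < 1 / a i :=
    fun i => lt_trans (h1 i) ((div_lt_div_iff_of_pos_right (haiR i)).mpr hεlt1)
  have h3 : ∀ i : Fin m, 1 / (A:ℝ) < 1 / a i :=
    fun i => one_div_lt_one_div_of_lt (haiR i) (hltR i)
  have h4 : ∀ i : Fin m, ε / (a i : ℝ) < 1 / A := by
    intro i
    have e1 : ε / (a i : ℝ) ≤ ε :=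
      div_le_self hεpos.le (by exact_mod_cast ha i)
    have e2 : ε < 1 / A := by
      rw [hε]
      exact one_div_lt_one_div_of_lt hAR (by linarith)
    exact lt_of_le_of_lt e1 e2
  -- the null set where some value is neither ε nor 1
  set N : Set Ω := ⋃ i, ({ω | c i ω = ε} ∪ {ω | c i ω = 1})ᶜ with hN
  have hmε : ∀ i, MeasurableSet {ω | c i ω = ε} :=
    fun i => (hmeas i) (measurableSet_singleton ε)
  have hm1 : ∀ i, MeasurableSet {ω | c i ω = 1} :=
    fun i => (hmeas i) (measurableSet_singleton 1)
  have hNnull : μ N = 0 := by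
    rw [hN, measure_iUnion_null_iff]
    intro i
    have hd : Disjoint {ω | c i ω = ε} {ω | c i ω = 1} := by
      rw [Set.disjoint_left]
      rintro ω hx hy
      exact hεne1 (hx ▸ hy)
    rw [prob_compl_eq_zero_iff ((hmε i).union (hm1 i)),
      measure_union hd (hm1 i), (hdist i).1, (hdist i).2, ENNReal.add_halves]
  have hNc : ∀ ω, ω ∈ Nᶜ ↔ ∀ j, c j ω = ε ∨ c j ω = 1 := by
    intro ω
    simp only [hN, Set.mem_compl_iff, Set.mem_iUnion, not_exists, Set.mem_union,
      Set.mem_setOf_eq, not_not, Classical.not_not]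
  -- the product events
  set B : Finset (Fin m) → Fin (m+1) → Set ℝ :=
    fun M => Fin.lastCases {1} (fun i => if i ∈ M then ({1} : Set ℝ) else {ε}) with hB
  have hpow : ((1:ℝ≥0∞)/2) ^ (m+1) = 2 ^ (-((m : ℤ) + 1)) := by
    have : (-((m : ℤ) + 1)) = -((m+1 : ℕ) : ℤ) := by push_cast; ring
    rw [this, ENNReal.zpow_neg, zpow_natCast,
      one_div, ENNReal.inv_pow]
  have key : ∀ M : Finset (Fin m),
      μ (⋂ j, c j ⁻¹' B M j) = 2 ^ (-((m : ℤ) + 1)) := by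
    intro M
    have hBm : ∀ j ∈ (Finset.univ : Finset (Fin (m+1))), MeasurableSet (B M j) := by
      intro j _
      induction j using Fin.lastCases with
      | last => simp only [hB, Fin.lastCases_last]; exact measurableSet_singleton 1
      | cast i =>
        simp only [hB, Fin.lastCases_castSucc]
        split <;> exact measurableSet_singleton _
    have hprod := hind.measure_inter_preimage_eq_mul Finset.univ hBm
    have heq : (⋂ j ∈ (Finset.univ : Finset (Fin (m+1))), c j ⁻¹' B M j)
        = ⋂ j, c j ⁻¹' B M j := by
      ext ω; simp
    rw [heq] at hprod
    rw [hprod]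
    have hfac : ∀ j, μ (c j ⁻¹' B M j) = 1/2 := by
      intro j
      induction j using Fin.lastCases with
      | last =>
        simp only [hB, Fin.lastCases_last]
        exact (hdist _).2
      | cast i =>
        simp only [hB, Fin.lastCases_castSucc]
        split
        · exact (hdist _).2
        · exact (hdist _).1
    calc ∏ j, μ (c j ⁻¹' B M j) = ∏ _j : Fin (m+1), ((1:ℝ≥0∞)/2) := by
          exact Finset.prod_congr rfl fun j _ => hfac j
      _ = ((1:ℝ≥0∞)/2) ^ (m+1) := by
          rw [Finset.prod_const, Finset.card_univ, Fintype.card_fin]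
      _ = 2 ^ (-((m : ℤ) + 1)) := hpow
  -- membership in the product event forces values in {ε, 1}
  have hSsub : ∀ M : Finset (Fin m), (⋂ j, c j ⁻¹' B M j) ⊆ Nᶜ := by
    intro M ω hω
    rw [Set.mem_iInter] at hω
    rw [hNc]
    intro j
    induction j using Fin.lastCases with
    | last =>
      have := hω (Fin.last m)
      simp only [hB, Fin.lastCases_last, Set.mem_preimage, Set.mem_singleton_iff] at this
      exact Or.inr this
    | cast i =>
      have := hω (Fin.castSucc i)
      simp only [hB, Fin.lastCases_castSucc] at this
      by_cases hiM : i ∈ M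
      · rw [if_pos hiM] at this; exact Or.inr this
      · rw [if_neg hiM] at this; exact Or.inl this
  -- pointwise description of the filter set
  have hPfull : ∀ ω, (∀ j, c j ω = ε ∨ c j ω = 1) → c (Fin.last m) ω = ε →
      Finset.univ.filter
        (fun i : Fin m => c (Fin.last m) ω / (A:ℝ) < c (Fin.castSucc i) ω / (a i : ℝ))
        = Finset.univ := by
    intro ω hω hlast
    rw [Finset.eq_univ_iff_forall]
    intro i
    simp only [Finset.mem_filter, Finset.mem_univ, true_and]
    rw [hlast]
    rcases hω (Fin.castSucc i) with h | h <;> rw [h]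
    · exact h1 i
    · exact h2 i
  -- describe the target events intersected with Nᶜ
  have hTM : ∀ M : Finset (Fin m), M ≠ Finset.univ →
      {ω | Finset.univ.filter
        (fun i : Fin m => c (Fin.last m) ω / (A:ℝ) < c (Fin.castSucc i) ω / (a i : ℝ)) = M}
        ∩ Nᶜ = ⋂ j, c j ⁻¹' B M j := by
    intro M hMne
    ext ω
    constructor
    · rintro ⟨hT, hNω⟩
      have hω := (hNc ω).mp hNω
      have hlast : c (Fin.last m) ω = 1 := by
        rcases hω (Fin.last m) with h | h
        · exact absurd (hT.symm.trans (hPfull ω hω h)) hMne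
        · exact h
      rw [Set.mem_iInter]
      intro j
      induction j using Fin.lastCases with
      | last =>
        simp only [hB, Fin.lastCases_last, Set.mem_preimage, Set.mem_singleton_iff]
        exact hlast
      | cast i =>
        simp only [hB, Fin.lastCases_castSucc, Set.mem_preimage]
        by_cases hiM : i ∈ M
        · rw [if_pos hiM]
          rw [← hT, Finset.mem_filter] at hiM
          have hp := hiM.2
          rw [hlast] at hp
          rcases hω (Fin.castSucc i) with h | h
          · rw [h] at hp; exact absurd hp (not_lt.mpr (h4 i).le)
          · exact h
        · rw [if_neg hiM]
          rw [← hT, Finset.mem_filter] at hiM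
          push_neg at hiM
          have hp := hiM (Finset.mem_univ i)
          rw [hlast] at hp
          rcases hω (Fin.castSucc i) with h | h
          · exact h
          · rw [h] at hp; exact absurd hp (not_le.mpr (h3 i))
    · intro hω
      have hNω : ω ∈ Nᶜ := hSsub M hω
      rw [Set.mem_iInter] at hω
      have hlast : c (Fin.last m) ω = 1 := by
        have := hω (Fin.last m)
        simpa only [hB, Fin.lastCases_last, Set.mem_preimage, Set.mem_singleton_iff] using this
      refine ⟨?_, hNω⟩
      show _ = M
      ext i
      simp only [Finset.mem_filter, Finset.mem_univ, true_and]
      rw [hlast]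
      have hi := hω (Fin.castSucc i)
      simp only [hB, Fin.lastCases_castSucc, Set.mem_preimage] at hi
      by_cases hiM : i ∈ M
      · rw [if_pos hiM] at hi
        rw [hi]
        exact iff_of_true (h3 i) hiM
      · rw [if_neg hiM] at hi
        rw [hi]
        exact iff_of_false (not_lt.mpr (h4 i).le) hiM
  -- measure of an event equals measure of its intersection with Nᶜ
  have hcut : ∀ s : Set Ω, μ (s ∩ Nᶜ) = μ s := by
    intro s
    exact measure_inter_conull (by rwa [compl_compl])
  constructor
  · -- the full-set case
    have hsplit :
        {ω | Finset.univ.filter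
          (fun i : Fin m => c (Fin.last m) ω / (A:ℝ) < c (Fin.castSucc i) ω / (a i : ℝ))
          = Finset.univ} ∩ Nᶜ
        = ({ω | c (Fin.last m) ω = ε} ∩ Nᶜ) ∪ ⋂ j, c j ⁻¹' B Finset.univ j := by
      ext ω
      constructor
      · rintro ⟨hT, hNω⟩
        have hω := (hNc ω).mp hNω
        rcases hω (Fin.last m) with h | h
        · exact Or.inl ⟨h, hNω⟩
        · refine Or.inr ?_
          rw [Set.mem_iInter]
          intro j
          induction j using Fin.lastCases with
          | last =>
            simp only [hB, Fin.lastCases_last, Set.mem_preimage, Set.mem_singleton_iff]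
            exact h
          | cast i =>
            simp only [hB, Fin.lastCases_castSucc, Set.mem_preimage, Finset.mem_univ,
              if_true]
            have hi : i ∈ Finset.univ.filter
                (fun i : Fin m =>
                  c (Fin.last m) ω / (A:ℝ) < c (Fin.castSucc i) ω / (a i : ℝ)) := by
              rw [hT]; exact Finset.mem_univ i
            rw [Finset.mem_filter] at hi
            have hp := hi.2
            rw [h] at hp
            rcases hω (Fin.castSucc i) with h' | h'
            · rw [h'] at hp; exact absurd hp (not_lt.mpr (h4 i).le)
            · exact h'
      · rintro (⟨hG, hNω⟩ | hω)
        · exact ⟨hPfull ω ((hNc ω).mp hNω) hG, hNω⟩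
        · have hNω : ω ∈ Nᶜ := hSsub Finset.univ hω
          rw [Set.mem_iInter] at hω
          have hlast : c (Fin.last m) ω = 1 := by
            have := hω (Fin.last m)
            simpa only [hB, Fin.lastCases_last, Set.mem_preimage,
              Set.mem_singleton_iff] using this
          refine ⟨?_, hNω⟩
          show _ = Finset.univ
          rw [Finset.eq_univ_iff_forall]
          intro i
          simp only [Finset.mem_filter, Finset.mem_univ, true_and]
          rw [hlast]
          have hi := hω (Fin.castSucc i)
          simp only [hB, Fin.lastCases_castSucc, Set.mem_preimage, Finset.mem_univ,
            if_true] at hi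
          rw [hi]
          exact h3 i
    have hdisj : Disjoint ({ω | c (Fin.last m) ω = ε} ∩ Nᶜ)
        (⋂ j, c j ⁻¹' B Finset.univ j) := by
      rw [Set.disjoint_left]
      rintro ω ⟨hG, _⟩ hω
      rw [Set.mem_iInter] at hω
      have := hω (Fin.last m)
      simp only [hB, Fin.lastCases_last, Set.mem_preimage, Set.mem_singleton_iff] at this
      exact hεne1 (hG ▸ this)
    have hSm : MeasurableSet (⋂ j, c j ⁻¹' B Finset.univ j) := by
      refine MeasurableSet.iInter fun j => (hmeas j) ?_
      induction j using Fin.lastCases with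
      | last => simp only [hB, Fin.lastCases_last]; exact measurableSet_singleton 1
      | cast i =>
        simp only [hB, Fin.lastCases_castSucc]
        split <;> exact measurableSet_singleton _
    rw [← hcut, hsplit, measure_union hdisj hSm, hcut, (hdist (Fin.last m)).1,
      key Finset.univ]
  · -- proper subsets
    intro M hMne
    rw [← hcut, hTM M hMne, key M]
end

section
/- Let c₁,…,cₙ be real-valued random variables with ℙ(cᵢ = 0) = 0 and ℙ(cᵢ/aᵢ = cⱼ/aⱼ) = 0 for all i ≠ j, and let a₁,…,aₙ be positive integers with A = Σ_{j=1}^n aⱼ. For i ∈ {1,…,n} define the random variables S_i := Σ_{j ≠ i : c_j/a_j > c_i/a_i} a_j and, for b ∈ {0,…,A}, x_i(b) := min(1, max(0, (b − S_i)/a_i)) if c_i > 0 and x_i(b) := 0 if c_i < 0. Then for every i and every integer b with 1 ≤ b ≤ A, 𝔼[x_i(b)] − 𝔼[x_i(b−1)] = (1/a_i) Σ_{r=1}^{a_i} ℙ( c_i > 0 and S_i = b − r ). -/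
open scoped Classical ENNReal
open MeasureTheory ProbabilityTheory

lemma clip_of_nonpos {z : ℝ} (h : z ≤ 0) : min 1 (max 0 z) = 0 := by
  rw [max_eq_left h, min_eq_right zero_le_one]

lemma clip_of_ge_one {z : ℝ} (h : 1 ≤ z) : min 1 (max 0 z) = 1 := by
  rw [max_eq_right (le_trans zero_le_one h), min_eq_left h]

lemma clip_of_mem {z : ℝ} (h0 : 0 ≤ z) (h1 : z ≤ 1) : min 1 (max 0 z) = z := by
  rw [max_eq_right h0, min_eq_right h1]

/-- For the stochastic bilevel continuous knapsack problem with integer item sizes,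
the increase of the expected amount of item `i` when raising the capacity from
`b−1` to `b` equals `(1/aᵢ) Σ_{r=1}^{aᵢ} ℙ(cᵢ > 0 ∧ Sᵢ = b − r)`, where `Sᵢ` is the
total size of the items preferred over item `i`. -/
theorem stmt_8 {Ω : Type*} [MeasurableSpace Ω] (μ : Measure Ω) [IsProbabilityMeasure μ]
    (n : ℕ) (c : Fin n → Ω → ℝ) (hmeas : ∀ k, Measurable (c k))
    (a : Fin n → ℕ) (ha : ∀ k, 0 < a k)
    (A : ℕ) (hA : A = ∑ k, a k)
    (h0 : ∀ k, μ {ω | c k ω = 0} = 0)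
    (hne : ∀ k l : Fin n, k ≠ l →
      μ {ω | c k ω / (a k : ℝ) = c l ω / (a l : ℝ)} = 0)
    (S : Fin n → Ω → ℕ)
    (hS : ∀ (i : Fin n) (ω : Ω), S i ω =
      ∑ j ∈ Finset.univ.filter
        (fun j : Fin n => j ≠ i ∧ c i ω / (a i : ℝ) < c j ω / (a j : ℝ)), a j)
    (x : Fin n → ℝ → Ω → ℝ)
    (hx : ∀ (i : Fin n) (b : ℝ) (ω : Ω), x i b ω =
      if 0 < c i ω then min 1 (max 0 ((b - (S i ω : ℝ)) / (a i : ℝ))) else 0) :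
    ∀ i : Fin n, ∀ b : ℕ, 1 ≤ b → b ≤ A →
      (∫ ω, x i (b : ℝ) ω ∂μ) - (∫ ω, x i ((b : ℝ) - 1) ω ∂μ) =
        (1 / (a i : ℝ)) *
          ∑ r ∈ Finset.Icc 1 (a i),
            (μ {ω | 0 < c i ω ∧ S i ω + r = b}).toReal := by
  intro i b hb1 hbA
  have hai : (0:ℝ) < (a i : ℝ) := by exact_mod_cast ha i
  -- measurability of S i
  have hSmeas : Measurable (S i) := by
    have hfun : S i = fun ω => ∑ j : Fin n,
        if (j ≠ i ∧ c i ω / (a i : ℝ) < c j ω / (a j : ℝ)) then a j else 0 := by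
      funext ω
      rw [hS, Finset.sum_filter]
    rw [hfun]
    apply Finset.measurable_sum
    intro j _
    apply Measurable.ite _ measurable_const measurable_const
    have heq : {ω | j ≠ i ∧ c i ω / (a i : ℝ) < c j ω / (a j : ℝ)}
        = {ω : Ω | j ≠ i} ∩ {ω | c i ω / (a i : ℝ) < c j ω / (a j : ℝ)} := rfl
    rw [heq]
    exact (MeasurableSet.const _).inter
      (measurableSet_lt ((hmeas i).div_const _) ((hmeas j).div_const _))
  -- measurability of x i t for each t
  have hxmeas : ∀ t : ℝ, Measurable (x i t) := by
    intro t
    have hfun : x i t = fun ω =>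
        if 0 < c i ω then min 1 (max 0 ((t - (S i ω : ℝ)) / (a i : ℝ))) else 0 := by
      funext ω; exact hx i t ω
    rw [hfun]
    apply Measurable.ite (measurableSet_lt measurable_const (hmeas i)) _ measurable_const
    have hScast : Measurable (fun ω => (S i ω : ℝ)) :=
      measurable_from_top.comp hSmeas
    exact (measurable_const.min (measurable_const.max
      ((measurable_const.sub hScast).div_const _)))
  have hint : ∀ t : ℝ, Integrable (x i t) μ := by
    intro t
    apply Integrable.mono' (integrable_const (1:ℝ)) (hxmeas t).aestronglyMeasurable
    filter_upwards with ω
    rw [hx]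
    split
    · have h1 : (0:ℝ) ≤ min 1 (max 0 ((t - (S i ω : ℝ)) / (a i : ℝ))) :=
        le_min zero_le_one (le_max_left _ _)
      rw [Real.norm_eq_abs, abs_of_nonneg h1]
      exact min_le_left _ _
    · simp
  -- measurable sets for the indicators
  have hsets : ∀ r : ℕ, MeasurableSet {ω | 0 < c i ω ∧ S i ω + r = b} := by
    intro r
    have heq : {ω | 0 < c i ω ∧ S i ω + r = b}
        = {ω | 0 < c i ω} ∩ (S i) ⁻¹' {m | m + r = b} := rfl
    rw [heq]
    exact (measurableSet_lt measurable_const (hmeas i)).inter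
      (hSmeas (by trivial))
  -- pointwise key identity
  have key : ∀ ω, x i (b : ℝ) ω - x i ((b : ℝ) - 1) ω =
      ∑ r ∈ Finset.Icc 1 (a i),
        Set.indicator {ω' | 0 < c i ω' ∧ S i ω' + r = b} (fun _ => (a i : ℝ)⁻¹) ω := by
    intro ω
    rw [hx, hx]
    by_cases hc : 0 < c i ω
    · simp only [if_pos hc]
      set s := S i ω with hs
      have hind : ∀ r : ℕ,
          Set.indicator {ω' | 0 < c i ω' ∧ S i ω' + r = b} (fun _ => (a i : ℝ)⁻¹) ω
          = if s + r = b then (a i : ℝ)⁻¹ else 0 := by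
        intro r
        rw [Set.indicator_apply]
        by_cases hm : s + r = b
        · rw [if_pos ⟨hc, hm⟩, if_pos hm]
        · rw [if_neg (fun h => hm h.2), if_neg hm]
      simp only [hind]
      rcases lt_or_ge s b with hsb | hsb
      · rcases le_or_gt b (s + a i) with hba | hba
        · -- interesting case: difference = 1/a
          have hsum : (∑ r ∈ Finset.Icc 1 (a i), if s + r = b then (a i : ℝ)⁻¹ else 0)
              = (a i : ℝ)⁻¹ := by
            rw [Finset.sum_eq_single_of_mem (b - s)]
            · rw [if_pos (by omega)]
            · simp only [Finset.mem_Icc]; omega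
            · intro r _ hr
              rw [if_neg (by omega)]
          rw [hsum]
          have h1 : ((b : ℝ) - (s : ℝ)) / (a i : ℝ) ≤ 1 := by
            rw [div_le_one hai]
            have : (b : ℝ) ≤ (s : ℝ) + (a i : ℝ) := by exact_mod_cast hba
            linarith
          have h0' : (0:ℝ) ≤ ((b : ℝ) - 1 - (s : ℝ)) / (a i : ℝ) := by
            apply div_nonneg _ (le_of_lt hai)
            have : (s : ℝ) + 1 ≤ (b : ℝ) := by exact_mod_cast hsb
            linarith
          have h2 : (0:ℝ) ≤ ((b : ℝ) - (s : ℝ)) / (a i : ℝ) := by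
            apply div_nonneg _ (le_of_lt hai)
            have : (s : ℝ) + 1 ≤ (b : ℝ) := by exact_mod_cast hsb
            linarith
          have h3 : ((b : ℝ) - 1 - (s : ℝ)) / (a i : ℝ) ≤ 1 := by
            rw [div_le_one hai]
            have : (b : ℝ) ≤ (s : ℝ) + (a i : ℝ) := by exact_mod_cast hba
            linarith
          rw [clip_of_mem h2 h1, clip_of_mem h0' h3]
          field_simp
          ring
        · -- b > s + a i : both equal 1
          have hb' : (s : ℝ) + (a i : ℝ) + 1 ≤ (b : ℝ) := by exact_mod_cast hba
          rw [clip_of_ge_one (by rw [le_div_iff₀ hai]; linarith),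
            clip_of_ge_one (by rw [le_div_iff₀ hai]; linarith)]
          rw [Finset.sum_eq_zero]
          · ring
          · intro r hr
            rw [Finset.mem_Icc] at hr
            rw [if_neg (by omega)]
      · -- b ≤ s : both equal 0
        have hb' : (b : ℝ) ≤ (s : ℝ) := by exact_mod_cast hsb
        rw [clip_of_nonpos (div_nonpos_of_nonpos_of_nonneg (by linarith) (le_of_lt hai)),
          clip_of_nonpos (div_nonpos_of_nonpos_of_nonneg (by linarith) (le_of_lt hai))]
        rw [Finset.sum_eq_zero]
        · ring
        · intro r hr
          rw [Finset.mem_Icc] at hr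
          rw [if_neg (by omega)]
    · simp only [if_neg hc]
      rw [Finset.sum_eq_zero]
      · ring
      · intro r _
        rw [Set.indicator_apply, if_neg (fun h => hc h.1)]
  -- conclude
  rw [← integral_sub (hint _) (hint _)]
  have hfuneq : (fun ω => x i (b : ℝ) ω - x i ((b : ℝ) - 1) ω)
      = fun ω => ∑ r ∈ Finset.Icc 1 (a i),
        Set.indicator {ω' | 0 < c i ω' ∧ S i ω' + r = b} (fun _ => (a i : ℝ)⁻¹) ω := by
    funext ω; exact key ω
  rw [hfuneq, integral_finset_sum]
  · rw [Finset.mul_sum]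
    apply Finset.sum_congr rfl
    intro r _
    rw [integral_indicator_const _ (hsets r)]
    simp [smul_eq_mul, one_div, mul_comm, measureReal_def]
  · intro r _
    exact (integrable_const _).indicator (hsets r)
end

section
/- Let c₁,…,cₙ be independent real-valued random variables and let a₁,…,aₙ be positive integers. Let i ∈ {1,…,n}, I ⊆ {1,…,n}∖{i}, b ∈ ℤ, and let J ⊆ ℝ be an interval such that for every j ∈ I the function γ ↦ ℙ(c_j/a_j > γ/a_i) is affine on J. Then there exists a polynomial p of degree at most |I| such that h_i(b, I, γ) = p(γ) for all γ ∈ J. -/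
open scoped Classical ENNReal
open MeasureTheory ProbabilityTheory

private lemma stmt_9_aux {Ω : Type*} [MeasurableSpace Ω] (μ : Measure Ω) [IsProbabilityMeasure μ]
    (n : ℕ) (c : Fin n → Ω → ℝ) (hmeas : ∀ k, Measurable (c k))
    (hind : iIndepFun c μ)
    (a : Fin n → ℕ) (i : Fin n) (J : Set ℝ) :
    ∀ I : Finset (Fin n), (∀ j ∈ I, ∃ α β : ℝ, ∀ γ ∈ J,
      (μ {ω | γ / (a i : ℝ) < c j ω / (a j : ℝ)}).toReal = α * γ + β) →
    ∀ b : ℤ, ∃ p : Polynomial ℝ, p.natDegree ≤ I.card ∧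
      ∀ γ ∈ J,
        (μ {ω | ∑ k ∈ I.filter (fun k => γ / (a i : ℝ) < c k ω / (a k : ℝ)),
          (a k : ℤ) = b}).toReal = p.eval γ := by
  intro I
  induction I using Finset.induction_on with
  | empty =>
    intro _ b
    refine ⟨Polynomial.C (if b = 0 then 1 else 0), by split <;> simp, ?_⟩
    intro γ hγ
    simp only [Finset.filter_empty, Finset.sum_empty]
    by_cases hb : b = 0
    · simp [hb, eq_comm]
    · have : {ω : Ω | (0 : ℤ) = b} = ∅ := by
        ext ω; simp [eq_comm, hb]
      simp [this, hb]
  | @insert j s hj ih =>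
    intro haff b
    obtain ⟨α, β, hab⟩ := haff j (Finset.mem_insert_self j s)
    obtain ⟨p₁, hp₁d, hp₁⟩ := ih (fun k hk => haff k (Finset.mem_insert_of_mem hk)) (b - a j)
    obtain ⟨p₂, hp₂d, hp₂⟩ := ih (fun k hk => haff k (Finset.mem_insert_of_mem hk)) b
    set q : Polynomial ℝ := Polynomial.C α * Polynomial.X + Polynomial.C β with hqdef
    have hq : q.natDegree ≤ 1 := by
      refine (Polynomial.natDegree_add_le _ _).trans (max_le ?_ (by simp))
      exact (Polynomial.natDegree_C_mul_le _ _).trans Polynomial.natDegree_X_le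
    have h1q : (1 - q).natDegree ≤ 1 := by
      refine (Polynomial.natDegree_sub_le _ _).trans (max_le (by simp) hq)
    refine ⟨q * p₁ + (1 - q) * p₂, ?_, ?_⟩
    · refine (Polynomial.natDegree_add_le _ _).trans (max_le ?_ ?_) <;>
        rw [Finset.card_insert_of_notMem hj]
      · exact (Polynomial.natDegree_mul_le).trans
          (by omega : q.natDegree + p₁.natDegree ≤ s.card + 1)
      · exact (Polynomial.natDegree_mul_le).trans
          (by omega : (1 - q).natDegree + p₂.natDegree ≤ s.card + 1)
    · intro γ hγ
      -- the condition set for `j`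
      set Sset : Set ℝ := {x : ℝ | γ / (a i : ℝ) < x / (a j : ℝ)} with hSdef
      have hSmeas : MeasurableSet Sset :=
        measurableSet_lt measurable_const (measurable_id.div_const _)
      set A : Set Ω := c j ⁻¹' Sset with hAdef
      -- the tuple of the other variables
      set G : Ω → (↥(s : Finset (Fin n)) → ℝ) := fun ω k => c k ω with hGdef
      have hGmeas : Measurable G := measurable_pi_lambda _ (fun k => hmeas k)
      -- the sum as a function of the tuple
      set F : (↥(s : Finset (Fin n)) → ℝ) → ℤ := fun x =>
        ∑ k ∈ s.attach, if γ / (a i : ℝ) < x k / (a (k : Fin n) : ℝ) then (a (k : Fin n) : ℤ)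
          else 0 with hFdef
      have hFmeas : Measurable F := by
        refine Finset.measurable_sum _ (fun k _ => ?_)
        refine Measurable.ite ?_ measurable_const measurable_const
        exact measurableSet_lt measurable_const ((measurable_pi_apply k).div_const _)
      -- rewrite the small events as preimages
      have hEvent : ∀ b' : ℤ,
          {ω | ∑ k ∈ s.filter (fun k => γ / (a i : ℝ) < c k ω / (a k : ℝ)),
            (a k : ℤ) = b'} = G ⁻¹' (F ⁻¹' {b'}) := by
        intro b'
        ext ω
        simp only [Set.mem_setOf_eq, Set.mem_preimage, Set.mem_singleton_iff, hFdef, hGdef]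
        rw [Finset.sum_filter, ← Finset.sum_attach s
          (fun k => if γ / (a i : ℝ) < c k ω / (a k : ℝ) then (a k : ℤ) else 0)]
      have hE1 : MeasurableSet (G ⁻¹' (F ⁻¹' {b - (a j : ℤ)})) :=
        hGmeas (hFmeas (measurableSet_singleton _))
      have hE2 : MeasurableSet (G ⁻¹' (F ⁻¹' {b})) :=
        hGmeas (hFmeas (measurableSet_singleton _))
      -- independence of c j and G
      have hInd : IndepFun (c j) G μ := by
        have h := hind.indepFun_finset {j} s (by simpa using hj) hmeas
        have := h.comp (φ := fun x : (↥({j} : Finset (Fin n)) → ℝ) =>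
          x ⟨j, Finset.mem_singleton_self j⟩) (ψ := id) (_mγ := inferInstance) (_mγ' := inferInstance) (measurable_pi_apply _) measurable_id
        exact this
      -- decompose the big event
      have hsplit : {ω | ∑ k ∈ (insert j s).filter
            (fun k => γ / (a i : ℝ) < c k ω / (a k : ℝ)), (a k : ℤ) = b}
          = (A ∩ G ⁻¹' (F ⁻¹' {b - (a j : ℤ)})) ∪ (Aᶜ ∩ G ⁻¹' (F ⁻¹' {b})) := by
        rw [← hEvent (b - (a j : ℤ)), ← hEvent b]
        ext ω
        by_cases h : γ / (a i : ℝ) < c j ω / (a j : ℝ)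
        · have hjf : j ∉ s.filter (fun k => γ / (a i : ℝ) < c k ω / (a k : ℝ)) :=
            fun hh => hj (Finset.mem_of_mem_filter _ hh)
          simp only [Set.mem_setOf_eq, Finset.filter_insert, if_pos h,
            Finset.sum_insert hjf, Set.mem_union, Set.mem_inter_iff, Set.mem_compl_iff,
            hAdef, Set.mem_preimage, hSdef, Set.mem_setOf_eq]
          constructor
          · intro hh; exact Or.inl ⟨h, by omega⟩
          · rintro (⟨_, hh⟩ | ⟨hh, _⟩)
            · omega
            · exact absurd h hh
        · have : (insert j s).filter (fun k => γ / (a i : ℝ) < c k ω / (a k : ℝ))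
              = s.filter (fun k => γ / (a i : ℝ) < c k ω / (a k : ℝ)) := by
            rw [Finset.filter_insert, if_neg h]
          simp only [Set.mem_setOf_eq, this, Set.mem_union, Set.mem_inter_iff,
            Set.mem_compl_iff, hAdef, Set.mem_preimage, hSdef, Set.mem_setOf_eq]
          constructor
          · intro hh; exact Or.inr ⟨h, hh⟩
          · rintro (⟨hh, _⟩ | ⟨_, hh⟩)
            · exact absurd hh h
            · exact hh
      have hdisj : Disjoint (A ∩ G ⁻¹' (F ⁻¹' {b - (a j : ℤ)})) (Aᶜ ∩ G ⁻¹' (F ⁻¹' {b})) :=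
        Disjoint.mono Set.inter_subset_left Set.inter_subset_left disjoint_compl_right
      have hmeas2 : MeasurableSet (Aᶜ ∩ G ⁻¹' (F ⁻¹' {b})) :=
        ((hmeas j hSmeas).compl).inter hE2
      rw [hsplit, measure_union hdisj hmeas2]
      have hmul1 : μ (A ∩ G ⁻¹' (F ⁻¹' {b - (a j : ℤ)}))
          = μ A * μ (G ⁻¹' (F ⁻¹' {b - (a j : ℤ)})) :=
        hInd.measure_inter_preimage_eq_mul _ _ hSmeas (hFmeas (measurableSet_singleton _))
      have hmul2 : μ (Aᶜ ∩ G ⁻¹' (F ⁻¹' {b})) = μ Aᶜ * μ (G ⁻¹' (F ⁻¹' {b})) := by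
        have : Aᶜ = c j ⁻¹' Ssetᶜ := by rw [hAdef, Set.preimage_compl]
        rw [this]
        exact hInd.measure_inter_preimage_eq_mul _ _ hSmeas.compl
          (hFmeas (measurableSet_singleton _))
      rw [hmul1, hmul2, ENNReal.toReal_add (by finiteness) (by finiteness),
        ENNReal.toReal_mul, ENNReal.toReal_mul]
      have hAval : (μ A).toReal = α * γ + β := hab γ hγ
      have hAc : (μ Aᶜ).toReal = 1 - (α * γ + β) := by
        rw [prob_compl_eq_one_sub (hmeas j hSmeas), ENNReal.toReal_sub_of_le prob_le_one
          (by simp), ENNReal.toReal_one, hAval]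
      rw [hAval, hAc, ← hEvent (b - (a j : ℤ)), ← hEvent b, hp₁ γ hγ, hp₂ γ hγ]
      simp only [Polynomial.eval_add, Polynomial.eval_mul, Polynomial.eval_sub,
        Polynomial.eval_one, hqdef, Polynomial.eval_C, Polynomial.eval_X]

/-- If, on an interval `J`, the probabilities `γ ↦ ℙ(c_j/a_j > γ/a_i)` are affine
for all `j ∈ I`, then `γ ↦ h_i(b, I, γ) = ℙ(Σ_{j ∈ I, c_j/a_j > γ/a_i} a_j = b)`
agrees on `J` with a polynomial of degree at most `|I|`. -/
theorem stmt_9 {Ω : Type*} [MeasurableSpace Ω] (μ : Measure Ω) [IsProbabilityMeasure μ]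
    (n : ℕ) (c : Fin n → Ω → ℝ) (hmeas : ∀ k, Measurable (c k))
    (hind : iIndepFun c μ)
    (a : Fin n → ℕ) (ha : ∀ k, 0 < a k)
    (i : Fin n) (I : Finset (Fin n)) (hiI : i ∉ I) (b : ℤ)
    (J : Set ℝ) (hJ : J.OrdConnected)
    (haff : ∀ j ∈ I, ∃ α β : ℝ, ∀ γ ∈ J,
      (μ {ω | γ / (a i : ℝ) < c j ω / (a j : ℝ)}).toReal = α * γ + β) :
    ∃ p : Polynomial ℝ, p.natDegree ≤ I.card ∧
      ∀ γ ∈ J,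
        (μ {ω | ∑ k ∈ I.filter (fun k => γ / (a i : ℝ) < c k ω / (a k : ℝ)),
          (a k : ℤ) = b}).toReal = p.eval γ := by
  exact stmt_9_aux μ n c hmeas hind a i J I haff b
end

section
/- Let F : ℝ → ℝ be nondecreasing, right-continuous, with lim_{x→−∞} F(x) = 0 and lim_{x→∞} F(x) = 1, and let m ≥ 1 be an integer. For p ∈ (0,1) define Q(p) := inf{x ∈ ℝ : p ≤ F(x)}, and define G : ℝ → ℝ by G(x) := (1/m) · #{k ∈ {1,…,m} : Q((k − 1/2)/m) ≤ x}. Then |F(x) − G(x)| ≤ 1/(2m) for all x ∈ ℝ. -/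
open scoped Classical

open Filter Set

lemma quantile_le_iff_aux (F : ℝ → ℝ) (hmono : Monotone F)
    (hrc : ∀ x : ℝ, ContinuousWithinAt F (Set.Ici x) x)
    (hbot : Filter.Tendsto F Filter.atBot (nhds 0))
    (htop : Filter.Tendsto F Filter.atTop (nhds 1))
    {p : ℝ} (hp : p ∈ Set.Ioo (0 : ℝ) 1) (x : ℝ) :
    sInf {y : ℝ | p ≤ F y} ≤ x ↔ p ≤ F x := by
  obtain ⟨hp0, hp1⟩ := hp
  set S : Set ℝ := {y : ℝ | p ≤ F y} with hS
  have hne : S.Nonempty := by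
    have h1 : ∀ᶠ y in atTop, F y ∈ Set.Ioi p := htop (Ioi_mem_nhds hp1)
    obtain ⟨y, hy⟩ := h1.exists
    exact ⟨y, show p ≤ F y from le_of_lt hy⟩
  have hbdd : BddBelow S := by
    have h1 : ∀ᶠ y in atBot, F y ∈ Set.Iio p := hbot (Iio_mem_nhds hp0)
    obtain ⟨x0, hx0⟩ := (eventually_atBot).1 h1
    refine ⟨x0, fun y hy => ?_⟩
    by_contra h
    push_neg at h
    have hy' : p ≤ F y := hy
    have h2 : F y < p := hx0 y h.le
    exact absurd hy' h2.not_ge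
  constructor
  · intro h
    have haS : p ≤ F (sInf S) := by
      have hmem : sInf S ∈ closure S := csInf_mem_closure hne hbdd
      haveI hNe : (nhdsWithin (sInf S) S).NeBot :=
        mem_closure_iff_nhdsWithin_neBot.1 hmem
      have hsub : S ⊆ Set.Ici (sInf S) := fun y hy => csInf_le hbdd hy
      have hcw : ContinuousWithinAt F S (sInf S) := (hrc (sInf S)).mono hsub
      exact ge_of_tendsto hcw (eventually_nhdsWithin_of_forall (fun y hy => hy))
    exact le_trans haS (hmono h)
  · intro h
    exact csInf_le hbdd h

/-- The cumulative distribution function `G` of the uniform distribution on the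
`m` quantile points `Q((k − 1/2)/m)`, `k = 1,…,m`, approximates the original
cumulative distribution function `F` uniformly within `1/(2m)`. -/
theorem stmt_11 (F : ℝ → ℝ) (hmono : Monotone F)
    (hrc : ∀ x : ℝ, ContinuousWithinAt F (Set.Ici x) x)
    (hbot : Filter.Tendsto F Filter.atBot (nhds 0))
    (htop : Filter.Tendsto F Filter.atTop (nhds 1))
    (m : ℕ) (hm : 1 ≤ m)
    (Q : ℝ → ℝ) (hQ : ∀ p : ℝ, p ∈ Set.Ioo (0 : ℝ) 1 → Q p = sInf {x : ℝ | p ≤ F x})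
    (G : ℝ → ℝ)
    (hG : ∀ x : ℝ, G x = (1 / (m : ℝ)) *
      ((Finset.Icc 1 m).filter
        (fun k : ℕ => Q (((k : ℝ) - 1 / 2) / (m : ℝ)) ≤ x)).card) :
    ∀ x : ℝ, |F x - G x| ≤ 1 / (2 * (m : ℝ)) := by
  intro x
  have hm0 : (0 : ℝ) < (m : ℝ) := by exact_mod_cast hm
  have ht0 : 0 ≤ F x := by
    refine le_of_tendsto hbot ?_
    filter_upwards [eventually_le_atBot x] with y hy
    exact hmono hy
  have ht1 : F x ≤ 1 := by
    refine ge_of_tendsto htop ?_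
    filter_upwards [eventually_ge_atTop x] with y hy
    exact hmono hy
  set r : ℝ := (m : ℝ) * F x + 1 / 2 with hr
  have hr0 : 0 ≤ r := by positivity
  set N : ℕ := ⌊r⌋₊ with hN
  have hrm : r < (m : ℝ) + 1 := by rw [hr]; nlinarith
  have hNm : N ≤ m := by
    have := (Nat.floor_lt hr0).2 (by exact_mod_cast hrm : r < ((m + 1 : ℕ) : ℝ))
    omega
  -- the filtered set is exactly Icc 1 N
  have hfilter : (Finset.Icc 1 m).filter
      (fun k : ℕ => Q (((k : ℝ) - 1 / 2) / (m : ℝ)) ≤ x) = Finset.Icc 1 N := by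
    ext k
    simp only [Finset.mem_filter, Finset.mem_Icc]
    constructor
    · rintro ⟨⟨hk1, hkm⟩, hQk⟩
      refine ⟨hk1, ?_⟩
      have hk1' : (1 : ℝ) ≤ (k : ℝ) := by exact_mod_cast hk1
      have hkm' : (k : ℝ) ≤ (m : ℝ) := by exact_mod_cast hkm
      have hpk : (((k : ℝ) - 1 / 2) / (m : ℝ)) ∈ Set.Ioo (0 : ℝ) 1 := by
        constructor
        · apply div_pos (by linarith) hm0
        · rw [div_lt_one hm0]; linarith
      rw [hQ _ hpk] at hQk
      have hFx : ((k : ℝ) - 1 / 2) / (m : ℝ) ≤ F x :=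
        (quantile_le_iff_aux F hmono hrc hbot htop hpk x).1 hQk
      have : (k : ℝ) ≤ r := by
        rw [div_le_iff₀ hm0] at hFx
        rw [hr]; linarith
      exact Nat.le_floor this
    · rintro ⟨hk1, hkN⟩
      have hkm : k ≤ m := hkN.trans hNm
      refine ⟨⟨hk1, hkm⟩, ?_⟩
      have hk1' : (1 : ℝ) ≤ (k : ℝ) := by exact_mod_cast hk1
      have hkm' : (k : ℝ) ≤ (m : ℝ) := by exact_mod_cast hkm
      have hpk : (((k : ℝ) - 1 / 2) / (m : ℝ)) ∈ Set.Ioo (0 : ℝ) 1 := by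
        constructor
        · apply div_pos (by linarith) hm0
        · rw [div_lt_one hm0]; linarith
      rw [hQ _ hpk]
      refine (quantile_le_iff_aux F hmono hrc hbot htop hpk x).2 ?_
      have hkr : (k : ℝ) ≤ r :=
        le_trans (by exact_mod_cast hkN : (k : ℝ) ≤ (N : ℝ)) (Nat.floor_le hr0)
      rw [div_le_iff₀ hm0]
      rw [hr] at hkr; linarith
  have hGx : G x = (N : ℝ) / (m : ℝ) := by
    rw [hG x, hfilter, Nat.card_Icc]
    simp only [Nat.add_sub_cancel]
    ring
  have hN1 : (N : ℝ) ≤ (m : ℝ) * F x + 1 / 2 := by rw [hr] at *; exact Nat.floor_le hr0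
  have hN2 : (m : ℝ) * F x + 1 / 2 < (N : ℝ) + 1 := by
    have := Nat.lt_floor_add_one r
    rw [hr] at this; exact_mod_cast this
  have key : |F x * (m : ℝ) - (N : ℝ)| ≤ 1 / 2 := by
    rw [abs_le]; constructor <;> linarith
  have hdiff : F x - (N : ℝ) / (m : ℝ) = (F x * (m : ℝ) - (N : ℝ)) / (m : ℝ) := by
    field_simp
  rw [hGx, hdiff, abs_div, abs_of_pos hm0, div_le_div_iff₀ hm0 (by positivity)]
  nlinarith [key, hm0, abs_nonneg (F x * (m : ℝ) - (N : ℝ))]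
end

section
/- Let n ∈ ℕ, let a ∈ ℝⁿ with aᵢ > 0, and let c ∈ ℝⁿ. Append an item n+1 with size a_{n+1} = 1 and value c_{n+1} > 0 satisfying c_{n+1} > cᵢ/aᵢ for all i ∈ {1,…,n}. Then for every b with 1 ≤ b ≤ 1 + Σ_{i=1}^n aᵢ, the optimal value of the extended continuous knapsack problem max{Σ_{i=1}^{n+1} cᵢxᵢ : Σ_{i=1}^{n+1} aᵢxᵢ ≤ b, x ∈ [0,1]^{n+1}} equals c_{n+1} + max{cᵀy : aᵀy ≤ b − 1, y ∈ [0,1]ⁿ}, and there is an optimal solution of the extended problem with x_{n+1} = 1. -/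
/-- Appending an item of size `1` whose profit ratio `c_{n+1}` strictly exceeds
all original profit ratios: for every capacity `1 ≤ b ≤ 1 + Σ aᵢ`, the optimal
value of the extended continuous knapsack problem equals `c_{n+1}` plus the
optimal value of the original problem with capacity `b − 1`, and some optimal
solution of the extended problem fully packs the new item. -/
theorem stmt_14 (n : ℕ) (a c : Fin n → ℝ) (ha : ∀ i, 0 < a i)
    (cN : ℝ) (hcN : 0 < cN) (hcNr : ∀ i, c i / a i < cN)
    (b : ℝ) (hb1 : 1 ≤ b) (hb2 : b ≤ 1 + ∑ i, a i) :
    ∃ v : ℝ,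
      IsGreatest {r : ℝ | ∃ y : Fin n → ℝ,
        (∀ i, y i ∈ Set.Icc (0 : ℝ) 1) ∧ ∑ i, a i * y i ≤ b - 1 ∧
          r = ∑ i, c i * y i} v ∧
      IsGreatest {r : ℝ | ∃ (x : Fin n → ℝ) (t : ℝ),
        (∀ i, x i ∈ Set.Icc (0 : ℝ) 1) ∧ t ∈ Set.Icc (0 : ℝ) 1 ∧
          (∑ i, a i * x i) + 1 * t ≤ b ∧
          r = (∑ i, c i * x i) + cN * t} (cN + v) ∧
      ∃ (x : Fin n → ℝ) (t : ℝ),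
        (∀ i, x i ∈ Set.Icc (0 : ℝ) 1) ∧ t ∈ Set.Icc (0 : ℝ) 1 ∧
          (∑ i, a i * x i) + 1 * t ≤ b ∧ t = 1 ∧
          (∑ i, c i * x i) + cN * t = cN + v := by
  -- the feasible region of the original problem
  set K : Set (Fin n → ℝ) :=
    {y | (∀ i, y i ∈ Set.Icc (0 : ℝ) 1) ∧ ∑ i, a i * y i ≤ b - 1} with hK
  have hKcomp : IsCompact K := by
    have h1 : IsCompact (Set.Icc (0 : Fin n → ℝ) 1) := isCompact_Icc
    have h2 : IsClosed {y : Fin n → ℝ | ∑ i, a i * y i ≤ b - 1} :=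
      isClosed_le (by continuity) continuous_const
    have : K = Set.Icc (0 : Fin n → ℝ) 1 ∩ {y | ∑ i, a i * y i ≤ b - 1} := by
      ext y
      simp only [hK, Set.mem_setOf_eq, Set.mem_inter_iff, Set.mem_Icc,
        Pi.le_def, Pi.zero_apply, Pi.one_apply]
      constructor
      · rintro ⟨h, h'⟩; exact ⟨⟨fun i => (h i).1, fun i => (h i).2⟩, h'⟩
      · rintro ⟨⟨h0, h1'⟩, h'⟩; exact ⟨fun i => ⟨h0 i, h1' i⟩, h'⟩
    rw [this]
    exact h1.inter_right h2
  have hKne : K.Nonempty := by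
    refine ⟨0, fun i => by simp, ?_⟩
    simp; linarith
  have hS : {r : ℝ | ∃ y : Fin n → ℝ,
      (∀ i, y i ∈ Set.Icc (0 : ℝ) 1) ∧ ∑ i, a i * y i ≤ b - 1 ∧
        r = ∑ i, c i * y i} = (fun y : Fin n → ℝ => ∑ i, c i * y i) '' K := by
    ext r
    simp only [Set.mem_setOf_eq, Set.mem_image, hK]
    constructor
    · rintro ⟨y, h1, h2, h3⟩; exact ⟨y, ⟨h1, h2⟩, h3.symm⟩
    · rintro ⟨y, ⟨h1, h2⟩, h3⟩; exact ⟨y, h1, h2, h3.symm⟩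
  have himg : IsCompact ((fun y : Fin n → ℝ => ∑ i, c i * y i) '' K) :=
    hKcomp.image (by continuity)
  obtain ⟨v, hv⟩ := himg.exists_isGreatest (hKne.image _)
  rw [← hS] at hv
  refine ⟨v, hv, ?_, ?_⟩
  · obtain ⟨⟨y₀, hy₀, hy₀b, hy₀v⟩, hub⟩ := hv
    constructor
    · exact ⟨y₀, 1, hy₀, by norm_num, by linarith, by rw [hy₀v]; ring⟩
    · rintro r ⟨x, t, hx, ht, hcons, hr⟩
      -- key: ∑ c x ≤ cN * ∑ a x
      have hkey : ∑ i, c i * x i ≤ cN * ∑ i, a i * x i := by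
        rw [Finset.mul_sum]
        apply Finset.sum_le_sum
        intro i _
        have h1 : c i < cN * a i := (div_lt_iff₀ (ha i)).mp (hcNr i)
        have := mul_le_mul_of_nonneg_right h1.le (hx i).1
        linarith [this]
      set A := ∑ i, a i * x i with hA
      have hA0 : 0 ≤ A := Finset.sum_nonneg fun i _ =>
        mul_nonneg (ha i).le (hx i).1
      by_cases hcase : A ≤ b - 1
      · have hmem : (∑ i, c i * x i) ≤ v := hub ⟨x, hx, hcase, rfl⟩
        have := ht.2
        nlinarith
      · push_neg at hcase
        have hApos : 0 < A := by linarith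
        set l := (b - 1) / A with hl
        have hl0 : 0 ≤ l := div_nonneg (by linarith) hA0
        have hl1 : l ≤ 1 := (div_le_one hApos).mpr hcase.le
        have hlA : l * A = b - 1 := div_mul_cancel₀ _ (ne_of_gt hApos)
        have hymem : (fun i => l * x i) ∈ K := by
          constructor
          · intro i
            exact ⟨mul_nonneg hl0 (hx i).1,
              mul_le_one₀ hl1 (hx i).1 (hx i).2⟩
          · have : ∑ i, a i * (l * x i) = l * A := by
              rw [hA, Finset.mul_sum]; apply Finset.sum_congr rfl; intros; ring
            rw [this, hlA]
        have hlv : l * ∑ i, c i * x i ≤ v := by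
          have : ∑ i, c i * (l * x i) = l * ∑ i, c i * x i := by
            rw [Finset.mul_sum]; apply Finset.sum_congr rfl; intros; ring
          have := hub ⟨_, hymem.1, hymem.2, this.symm⟩
          linarith
        have hmul : (1 - l) * (∑ i, c i * x i) ≤ (1 - l) * (cN * A) :=
          mul_le_mul_of_nonneg_left hkey (by linarith)
        have ht2 := ht.2
        nlinarith
  · obtain ⟨⟨y₀, hy₀, hy₀b, hy₀v⟩, hub⟩ := hv
    exact ⟨y₀, 1, hy₀, by norm_num, by linarith, rfl, by rw [hy₀v]; ring⟩
end
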